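/- arXiv:2111.12633 — 4 statements merged into one kernel-verified Lean document; each statement's English description precedes it below -/
import Mathlib

section
/- Let 0 < ε ≤ 1, m > 0, T > 0, and let P^+_{m,T} be the maximum value of the unique 2T-periodic solution of the switched system F(m,T). Then Δ(ε,m,T) = (1/T)·ln((1 + m·sinh(P^+_{m,T}))/(1 − m·sinh(P^+_{m,T}))) − 2(m + ε). -/
open Real Filter Set

/-- The `2T`-periodic square wave: `+1` on `[0,T)`, `-1` on `[T,2T)`. -/
noncomputable def squareWave (T t : ℝ) : ℝ :=
  if Int.fract (t / (2 * T)) < 1 / 2 then 1 else -1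

/-- A solution of the switched system `F(m,T)`: a continuous function satisfying
`dV/dt = 2(u(t) - m sinh V)` away from the switching times `nT`, `n ∈ ℤ`. -/
def IsSolF (m T : ℝ) (V : ℝ → ℝ) : Prop :=
  Continuous V ∧ ∀ t : ℝ, (∀ n : ℤ, t ≠ n * T) →
    HasDerivAt V (2 * (squareWave T t - m * Real.sinh (V t))) t

/-- The quantity `Δ(ε,m,T)` associated with the periodic solution `P` of `F(m,T)`. -/
noncomputable def DeltaP (ε m T : ℝ) (P : ℝ → ℝ) : ℝ :=
  (1 / (2 * T)) * ∫ s in (0:ℝ)..(2 * T), 2 * (m * Real.cosh (P s) - m - ε)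

section SW
variable {T : ℝ} (hT : 0 < T)
include hT

lemma squareWave_antiperiodic (t : ℝ) : squareWave T (t + T) = - squareWave T t := by
  have h2T : (2 * T) ≠ 0 := by positivity
  have key : (t + T) / (2 * T) = t / (2 * T) + 1 / 2 := by field_simp
  unfold squareWave
  rw [key]
  set x := t / (2 * T) with hx
  have hfr : Int.fract (x + 1/2) = Int.fract (Int.fract x + 1/2) := by
    conv_lhs => rw [← Int.floor_add_fract x, add_assoc, Int.fract_intCast_add]
  rcases lt_or_ge (Int.fract x) (1/2) with h | h
  · have : Int.fract (Int.fract x + 1/2) = Int.fract x + 1/2 := by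
      rw [Int.fract_eq_self]
      constructor
      · have := Int.fract_nonneg x; linarith
      · linarith
    have hf0 := Int.fract_nonneg x
    rw [hfr, this, if_pos h, if_neg (by push_neg; linarith : ¬ (Int.fract x + 1/2 < 1/2))]
  · have h1 : Int.fract x < 1 := Int.fract_lt_one x
    have : Int.fract (Int.fract x + 1/2) = Int.fract x - 1/2 := by
      have : Int.fract x + 1/2 = (Int.fract x - 1/2) + (1:ℤ) := by push_cast; ring
      rw [this, Int.fract_add_intCast, Int.fract_eq_self]
      constructor <;> [linarith; linarith]
    rw [hfr, this]
    simp only [if_neg (not_lt.2 h), if_pos (by linarith : Int.fract x - 1/2 < 1/2)]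
    ring

lemma squareWave_periodic : Function.Periodic (squareWave T) (2 * T) := by
  intro t
  unfold squareWave
  have h2T : (2 * T) ≠ 0 := by positivity
  have : (t + 2 * T) / (2 * T) = t / (2 * T) + (1:ℤ) := by push_cast; field_simp
  rw [this, Int.fract_add_intCast]

lemma squareWave_pos {t : ℝ} (h0 : 0 < t) (h1 : t < T) : squareWave T t = 1 := by
  unfold squareWave
  have h2T : 0 < 2 * T := by positivity
  have hx0 : 0 ≤ t / (2 * T) := by positivity
  have hx1 : t / (2 * T) < 1/2 := by rw [div_lt_iff₀ h2T]; linarith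
  rw [Int.fract_eq_self.2 ⟨hx0, by linarith⟩, if_pos hx1]

lemma squareWave_neg {t : ℝ} (h0 : T < t) (h1 : t < 2 * T) : squareWave T t = -1 := by
  have : squareWave T ((t - T) + T) = - squareWave T (t - T) := squareWave_antiperiodic hT _
  rw [sub_add_cancel] at this
  rw [this, squareWave_pos hT (by linarith) (by linarith)]

lemma squareWave_pos' {t : ℝ} (h0 : 2 * T < t) (h1 : t < 3 * T) : squareWave T t = 1 := by
  have h := squareWave_periodic hT (t - 2 * T)
  rw [sub_add_cancel] at h
  rw [h]; exact squareWave_pos hT (by linarith) (by linarith)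

end SW

lemma mono_aux {f f' : ℝ → ℝ} {a b : ℝ}
    (hc : ContinuousOn f (Icc a b)) (hd : ∀ t ∈ Ioo a b, HasDerivAt f (f' t) t)
    (h0 : ∀ t ∈ Ioo a b, 0 ≤ f' t) : MonotoneOn f (Icc a b) := by
  apply monotoneOn_of_hasDerivWithinAt_nonneg (convex_Icc a b) hc
  · intro x hx
    rw [interior_Icc] at hx ⊢
    exact (hd x hx).hasDerivWithinAt
  · intro x hx; rw [interior_Icc] at hx; exact h0 x hx

lemma anti_aux {f f' : ℝ → ℝ} {a b : ℝ}
    (hc : ContinuousOn f (Icc a b)) (hd : ∀ t ∈ Ioo a b, HasDerivAt f (f' t) t)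
    (h0 : ∀ t ∈ Ioo a b, f' t ≤ 0) : AntitoneOn f (Icc a b) := by
  apply antitoneOn_of_hasDerivWithinAt_nonpos (convex_Icc a b) hc
  · intro x hx
    rw [interior_Icc] at hx ⊢
    exact (hd x hx).hasDerivWithinAt
  · intro x hx; rw [interior_Icc] at hx; exact h0 x hx

lemma sinh_sub_le {x y B : ℝ} (hxy : x ≤ y) (hx : -B ≤ x) (hy : y ≤ B) :
    Real.sinh y - Real.sinh x ≤ Real.cosh B * (y - x) := by
  rcases eq_or_lt_of_le hxy with rfl | hlt
  · simp
  · obtain ⟨c, hc, hceq⟩ := exists_hasDerivAt_eq_slope Real.sinh Real.cosh hlt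
      (Real.continuous_sinh.continuousOn) (fun t _ => Real.hasDerivAt_sinh t)
    have hB : 0 ≤ B := by nlinarith [hc.1, hc.2]
    have hcB : Real.cosh c ≤ Real.cosh B := by
      rw [Real.cosh_le_cosh, abs_le, abs_of_nonneg hB]
      constructor <;> nlinarith [hc.1, hc.2]
    rw [hceq] at hcB
    have hyx : (0:ℝ) < y - x := by linarith
    calc Real.sinh y - Real.sinh x = (Real.sinh y - Real.sinh x) / (y - x) * (y - x) := by
          rw [div_mul_cancel₀ _ (ne_of_gt hyx)]
      _ ≤ Real.cosh B * (y - x) := mul_le_mul_of_nonneg_right hcB hyx.le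

lemma sinh_mul_self_nonneg (x y : ℝ) : 0 ≤ (x - y) * (Real.sinh x - Real.sinh y) := by
  rcases le_total y x with h | h
  · exact mul_nonneg (by linarith) (by simp [Real.sinh_le_sinh, h])
  · have h1 : Real.sinh x ≤ Real.sinh y := by simp [Real.sinh_le_sinh, h]
    nlinarith

lemma mono_aux' {f : ℝ → ℝ} {a b : ℝ} (hc : ContinuousOn f (Icc a b))
    (hd : ∀ t ∈ Ioo a b, ∃ d, 0 ≤ d ∧ HasDerivAt f d t) : MonotoneOn f (Icc a b) := by
  classical
  choose! d hd0 hdd using hd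
  exact mono_aux hc hdd hd0

/-- Barrier lemma: if `f a < A` and whenever `f ≤ A` the derivative is at most `L (A - f)`,
then `f < A` on all of `[a,b]`. -/
lemma barrier {f : ℝ → ℝ} {a b A L : ℝ} (hcont : ContinuousOn f (Icc a b))
    (hd : ∀ t ∈ Ioo a b, ∃ d, HasDerivAt f d t ∧ (f t ≤ A → d ≤ L * (A - f t)))
    (hfa : f a < A) : ∀ t ∈ Icc a b, f t < A := by
  by_contra hcon
  push_neg at hcon
  obtain ⟨t₁, ht₁, hft₁⟩ := hcon
  set S : Set ℝ := {t | t ∈ Icc a t₁ ∧ A ≤ f t} with hS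
  have hSclosed : IsClosed S := by
    have : S = Icc a t₁ ∩ f ⁻¹' (Ici A) := by ext t; simp [hS, Set.mem_Ici]
    rw [this]
    exact ContinuousOn.preimage_isClosed_of_isClosed
      (hcont.mono (Icc_subset_Icc_right ht₁.2)) isClosed_Icc isClosed_Ici
  have hSne : S.Nonempty := ⟨t₁, ⟨ht₁.1, le_refl _⟩, hft₁⟩
  have hSbdd : BddBelow S := ⟨a, fun t ht => ht.1.1⟩
  set τ := sInf S with hτ
  have hτS : τ ∈ S := hSclosed.csInf_mem hSne hSbdd
  have haτ : a < τ := by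
    rcases lt_or_eq_of_le hτS.1.1 with h | h
    · exact h
    · exact absurd (h ▸ hτS.2) (not_le.2 hfa)
  have hbelow : ∀ t ∈ Ico a τ, f t < A := by
    intro t ht
    by_contra hge
    push_neg at hge
    have : t ∈ S := ⟨⟨ht.1, le_trans ht.2.le hτS.1.2⟩, hge⟩
    exact absurd (csInf_le hSbdd this) (not_le.2 ht.2)
  have hτb : τ ≤ b := le_trans hτS.1.2 ht₁.2
  set g : ℝ → ℝ := fun t => (A - f t) * Real.exp (L * t) with hg
  have hmono : MonotoneOn g (Icc a τ) := by
    apply mono_aux'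
    · exact (continuousOn_const.sub (hcont.mono (Icc_subset_Icc_right hτb))).mul
        (Real.continuous_exp.comp (continuous_const.mul continuous_id)).continuousOn
    · intro t ht
      have htab : t ∈ Ioo a b := ⟨ht.1, lt_of_lt_of_le ht.2 hτb⟩
      obtain ⟨d, hder, hineq⟩ := hd t htab
      have hflt : f t < A := hbelow t ⟨ht.1.le, ht.2⟩
      have hdle : d ≤ L * (A - f t) := hineq hflt.le
      refine ⟨(-d) * Real.exp (L * t) + (A - f t) * (Real.exp (L * t) * L), ?_, ?_⟩
      · have hexp : 0 < Real.exp (L * t) := Real.exp_pos _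
        nlinarith
      · have hv : HasDerivAt (fun s => Real.exp (L * s)) (Real.exp (L * t) * L) t := by
          simpa [mul_comm, Function.comp_def] using (Real.hasDerivAt_exp (L * t)).comp t ((hasDerivAt_id t).const_mul L)
        have hu : HasDerivAt (fun s => A - f s) (-d) t := by
          have h := (hasDerivAt_const t A).sub hder; rwa [zero_sub] at h
        exact hu.mul hv
  have h1 : g a ≤ g τ := hmono ⟨le_refl a, haτ.le⟩ ⟨haτ.le, le_refl τ⟩ haτ.le
  have h2 : 0 < g a := mul_pos (by linarith) (Real.exp_pos _)
  have h3 : g τ ≤ 0 := mul_nonpos_of_nonpos_of_nonneg (by linarith [hτS.2]) (Real.exp_pos _).le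
  linarith

lemma no_switch {T : ℝ} (hT : 0 < T) (k : ℤ) {t : ℝ} (h1 : (k:ℝ) * T < t)
    (h2 : t < ((k:ℝ) + 1) * T) : ∀ n : ℤ, t ≠ n * T := by
  intro n hn
  rw [hn] at h1 h2
  have hk : (k:ℝ) < n := lt_of_mul_lt_mul_right (by linarith) hT.le
  have hn' : (n:ℝ) < (k:ℝ) + 1 := by
    have := lt_of_mul_lt_mul_right (by linarith : (n:ℝ) * T < ((k:ℝ)+1) * T) hT.le
    exact this
  have hk2 : k < n := by exact_mod_cast hk
  have hn2 : (n:ℝ) < ((k+1 : ℤ) : ℝ) := by push_cast; linarith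
  have : n < k + 1 := by exact_mod_cast hn2
  omega

section Sol
variable {m T : ℝ} {P : ℝ → ℝ}

lemma deriv_seg1 (hT : 0 < T) (hP : IsSolF m T P) :
    ∀ t ∈ Ioo (0:ℝ) T, HasDerivAt P (2 * (1 - m * Real.sinh (P t))) t := by
  intro t ht
  have h := hP.2 t (no_switch hT 0 (by simpa using ht.1) (by norm_num; exact ht.2))
  rwa [squareWave_pos hT ht.1 ht.2] at h

lemma deriv_seg2 (hT : 0 < T) (hP : IsSolF m T P) :
    ∀ t ∈ Ioo T (2*T), HasDerivAt P (2 * (-1 - m * Real.sinh (P t))) t := by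
  intro t ht
  have h := hP.2 t (no_switch hT 1 (by push_cast; linarith [ht.1]) (by push_cast; linarith [ht.2]))
  rwa [squareWave_neg hT ht.1 ht.2] at h

lemma deriv_seg3 (hT : 0 < T) (hP : IsSolF m T P) :
    ∀ t ∈ Ioo (2*T) (3*T), HasDerivAt P (2 * (1 - m * Real.sinh (P t))) t := by
  intro t ht
  have h := hP.2 t (no_switch hT 2 (by push_cast; linarith [ht.1]) (by push_cast; linarith [ht.2]))
  rwa [squareWave_pos' hT ht.1 ht.2] at h

lemma sq_diff_anti (hm : 0 < m) {V W : ℝ → ℝ} {a b c : ℝ}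
    (hVc : ContinuousOn V (Icc a b)) (hWc : ContinuousOn W (Icc a b))
    (hV : ∀ t ∈ Ioo a b, HasDerivAt V (2 * (c - m * Real.sinh (V t))) t)
    (hW : ∀ t ∈ Ioo a b, HasDerivAt W (2 * (c - m * Real.sinh (W t))) t) :
    AntitoneOn (fun t => (V t - W t)^2) (Icc a b) := by
  apply anti_aux (f' := fun t => 2 * (V t - W t)^1 *
      (2 * (c - m * Real.sinh (V t)) - 2 * (c - m * Real.sinh (W t))))
  · exact ((hVc.sub hWc).pow 2)
  · intro t ht
    exact ((hV t ht).sub (hW t ht)).pow 2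
  · intro t ht
    have := sinh_mul_self_nonneg (V t) (W t)
    nlinarith
end Sol

lemma eq_of_sinh_prod {x y : ℝ} (h : (x - y) * (Real.sinh x - Real.sinh y) = 0) : x = y := by
  rcases lt_trichotomy x y with hl | he | hg
  · have h1 : Real.sinh x < Real.sinh y := Real.sinh_lt_sinh.2 hl; nlinarith
  · exact he
  · have h1 : Real.sinh y < Real.sinh x := Real.sinh_lt_sinh.2 hg; nlinarith

lemma sol_unique {m T : ℝ} (hm : 0 < m) (hT : 0 < T) {V W : ℝ → ℝ}
    (hV : IsSolF m T V) (hW : IsSolF m T W)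
    (hVp : Function.Periodic V (2*T)) (hWp : Function.Periodic W (2*T)) : V = W := by
  set h : ℝ → ℝ := fun t => (V t - W t)^2 with hh
  have hA1 : AntitoneOn h (Icc 0 T) :=
    sq_diff_anti hm hV.1.continuousOn hW.1.continuousOn (deriv_seg1 hT hV) (deriv_seg1 hT hW)
  have hA2 : AntitoneOn h (Icc T (2*T)) :=
    sq_diff_anti hm hV.1.continuousOn hW.1.continuousOn (deriv_seg2 hT hV) (deriv_seg2 hT hW)
  have h02 : h (2*T) = h 0 := by
    have hv := hVp 0; have hw := hWp 0
    rw [zero_add] at hv hw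
    simp [hh, hv, hw]
  have hT0 : h T ≤ h 0 := hA1 ⟨le_refl 0, hT.le⟩ ⟨hT.le, le_refl T⟩ hT.le
  have h2T : h (2*T) ≤ h T := hA2 ⟨le_refl T, by linarith⟩ ⟨by linarith, le_refl _⟩ (by linarith)
  have hTeq : h T = h 0 := le_antisymm hT0 (h02 ▸ h2T)
  have hconst1 : ∀ t ∈ Icc (0:ℝ) T, h t = h 0 := by
    intro t ht
    have h1 : h t ≤ h 0 := hA1 ⟨le_refl 0, hT.le⟩ ht ht.1
    have h2 : h T ≤ h t := hA1 ht ⟨hT.le, le_refl T⟩ ht.2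
    linarith [hTeq]
  have hconst2 : ∀ t ∈ Icc T (2*T), h t = h 0 := by
    intro t ht
    have h1 : h t ≤ h T := hA2 ⟨le_refl T, by linarith⟩ ht ht.1
    have h2 : h (2*T) ≤ h t := hA2 ht ⟨by linarith, le_refl _⟩ ht.2
    linarith [hTeq, h02]
  -- h is locally constant on the open segments, so its derivative vanishes there
  have key : ∀ (a b c : ℝ), Ioo a b ⊆ Icc 0 (2*T) →
      (∀ t ∈ Ioo a b, HasDerivAt V (2 * (c - m * Real.sinh (V t))) t) →
      (∀ t ∈ Ioo a b, HasDerivAt W (2 * (c - m * Real.sinh (W t))) t) →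
      (∀ t ∈ Ioo a b, h t = h 0) → ∀ t ∈ Ioo a b, V t = W t := by
    intro a b c hsub hdV hdW hc t ht
    have hd : HasDerivAt h (2 * (V t - W t)^1 *
        (2 * (c - m * Real.sinh (V t)) - 2 * (c - m * Real.sinh (W t)))) t :=
      ((hdV t ht).sub (hdW t ht)).pow 2
    have hev : h =ᶠ[nhds t] fun _ => h 0 :=
      Filter.eventually_of_mem (isOpen_Ioo.mem_nhds ht) hc
    have hd0 : HasDerivAt h 0 t := (hasDerivAt_const t (h 0)).congr_of_eventuallyEq hev
    have hzero := hd.unique hd0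
    apply eq_of_sinh_prod
    nlinarith [hzero]
  have heq1 : ∀ t ∈ Ioo (0:ℝ) T, V t = W t :=
    key 0 T 1 (fun t ht => ⟨ht.1.le, by linarith [ht.2]⟩) (deriv_seg1 hT hV) (deriv_seg1 hT hW)
      (fun t ht => hconst1 t ⟨ht.1.le, ht.2.le⟩)
  have heq2 : ∀ t ∈ Ioo T (2*T), V t = W t :=
    key T (2*T) (-1) (fun t ht => ⟨by linarith [ht.1], ht.2.le⟩) (deriv_seg2 hT hV)
      (deriv_seg2 hT hW) (fun t ht => hconst2 t ⟨ht.1.le, ht.2.le⟩)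
  have hEclosed : IsClosed {t : ℝ | V t = W t} := isClosed_eq hV.1 hW.1
  have hIcc1 : Icc (0:ℝ) T ⊆ {t : ℝ | V t = W t} := by
    rw [← closure_Ioo (ne_of_lt hT)]
    exact closure_minimal (fun t ht => heq1 t ht) hEclosed
  have hIcc2 : Icc T (2*T) ⊆ {t : ℝ | V t = W t} := by
    rw [← closure_Ioo (by linarith : T ≠ 2*T)]
    exact closure_minimal (fun t ht => heq2 t ht) hEclosed
  funext t
  obtain ⟨n, hn, -⟩ := existsUnique_zsmul_near_of_pos' (by positivity : (0:ℝ) < 2*T) t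
  have hv : V (t - n • (2*T)) = V t := hVp.sub_zsmul_eq n
  have hw : W (t - n • (2*T)) = W t := hWp.sub_zsmul_eq n
  set s := t - n • (2*T)
  have hs : s ∈ Ico 0 (2*T) := hn
  rcases le_total s T with h | h
  · have := hIcc1 ⟨hs.1, h⟩; rw [← hv, ← hw]; exact this
  · have := hIcc2 ⟨h, hs.2.le⟩; rw [← hv, ← hw]; exact this

lemma sol_sym {m T : ℝ} (hm : 0 < m) (hT : 0 < T) {P : ℝ → ℝ}
    (hP : IsSolF m T P) (hPp : Function.Periodic P (2*T)) : ∀ t, P (t + T) = - P t := by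
  set W : ℝ → ℝ := fun t => -P (t + T) with hWdef
  have hW : IsSolF m T W := by
    constructor
    · exact (hP.1.comp (continuous_id.add continuous_const)).neg
    · intro t hns
      have hns' : ∀ n : ℤ, t + T ≠ n * T := by
        intro n hcon
        apply hns (n - 1)
        push_cast
        linarith
      have hD := hP.2 (t + T) hns'
      have hD2 : HasDerivAt (fun s => P (s + T))
          (2 * (squareWave T (t+T) - m * Real.sinh (P (t+T)))) t := hD.comp_add_const t T
      have hD3 := hD2.neg
      refine HasDerivAt.congr_deriv hD3 ?_
      rw [squareWave_antiperiodic hT t]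
      have : P (t + T) = - W t := by simp [hWdef]
      rw [show Real.sinh (W t) = - Real.sinh (P (t + T)) by rw [this]; simp]
      ring
  have hWp : Function.Periodic W (2*T) := by
    intro t
    simp only [hWdef]
    rw [show t + 2*T + T = (t+T) + 2*T by ring, hPp (t+T)]
  have heq := sol_unique hm hT hW hP hWp hPp
  intro t
  have := congrFun heq t
  simp only [hWdef] at this
  linarith

lemma max_lemma {m T : ℝ} (hm : 0 < m) (hT : 0 < T) {P : ℝ → ℝ}
    (hP : IsSolF m T P) (hPp : Function.Periodic P (2*T)) :
    (∀ t, P t ≤ P T) ∧ P T < Real.arsinh (1/m) ∧ 0 ≤ P T := by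
  have hsym := sol_sym hm hT hP hPp
  set A := Real.arsinh (1/m) with hAdef
  have hsinhA : Real.sinh A = 1/m := Real.sinh_arsinh _
  have hmA : m * Real.sinh A = 1 := by rw [hsinhA]; field_simp
  have hA0 : 0 < A := Real.arsinh_pos_iff.2 (by positivity)
  have h2T : (0:ℝ) < 2*T := by linarith
  -- max and min over a period
  obtain ⟨ts, hts, hmaxon⟩ := isCompact_Icc.exists_isMaxOn (nonempty_Icc.2 (by linarith : T ≤ 3*T))
    (hP.1.continuousOn)
  obtain ⟨tm, htm, hminon⟩ := isCompact_Icc.exists_isMinOn (nonempty_Icc.2 (by linarith : T ≤ 3*T))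
    (hP.1.continuousOn)
  have himg : P '' Icc T (T + 2*T) = range P := hPp.image_Icc h2T T
  have h3Teq : T + 2*T = 3*T := by ring
  rw [h3Teq] at himg
  have hub : ∀ t, P t ≤ P ts := by
    intro t
    have : P t ∈ range P := mem_range_self t
    rw [← himg] at this
    obtain ⟨s, hs, hseq⟩ := this
    rw [← hseq]; exact hmaxon hs
  have hlb : ∀ t, P tm ≤ P t := by
    intro t
    have : P t ∈ range P := mem_range_self t
    rw [← himg] at this
    obtain ⟨s, hs, hseq⟩ := this
    rw [← hseq]; exact hminon hs
  set M := P ts with hMdef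
  have hM0 : 0 ≤ M := by
    have h1 : P (ts + T) = - M := hsym ts
    have := hub (ts + T)
    rw [h1] at this; linarith
  -- global bound B
  set B := max A (max M (-(P tm))) with hBdef
  have hAB : A ≤ B := le_max_left _ _
  have hPB : ∀ t, -B ≤ P t ∧ P t ≤ B := by
    intro t
    constructor
    · have h1 : P tm ≤ P t := hlb t
      have h2 : -(P tm) ≤ B := le_trans (le_max_right _ _) (le_max_right _ _)
      linarith
    · exact le_trans (hub t) (le_trans (le_max_left _ _) (le_max_right _ _))
  set L := 2 * m * Real.cosh B with hLdef
  have hcoshB : 0 < Real.cosh B := Real.cosh_pos B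
  -- step 1 : -A < P T
  have hPT : -A < P T := by
    by_contra hcon
    push_neg at hcon
    rcases eq_or_lt_of_le hcon with heq | hlt
    · -- P T = -A : contraction forces P ≡ -A on [T,2T]
      have hanti : AntitoneOn (fun t => (P t - (fun _ : ℝ => -A) t)^2) (Icc T (2*T)) := by
        apply sq_diff_anti hm hP.1.continuousOn continuousOn_const (deriv_seg2 hT hP)
        intro t _
        have : (2 : ℝ) * (-1 - m * Real.sinh (-A)) = 0 := by
          rw [Real.sinh_neg, hsinhA]; field_simp; norm_num
        rw [this]
        exact hasDerivAt_const t _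
      have h1 : (P (2*T) + A)^2 ≤ (P T + A)^2 := by
        have := hanti (left_mem_Icc.2 (by linarith)) (right_mem_Icc.2 (by linarith)) (by linarith)
        simpa [sub_neg_eq_add] using this
      have h2 : (P T + A)^2 = 0 := by rw [heq]; ring
      have h3 : P (2*T) = -A := by nlinarith [sq_nonneg (P (2*T) + A)]
      have h4 : P (2*T) = - P T := by
        have := hsym T; rwa [show T + T = 2*T by ring] at this
      rw [h3, ← heq] at h4
      have : A = 0 := by linarith
      linarith
    · -- P T < -A : P stays below -A on [T,2T], contradiction with P 2T = -P T > A
      have hstay : ∀ t ∈ Icc T (2*T), P t < -A := by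
        apply barrier (L := L) hP.1.continuousOn _ hlt
        intro t ht
        refine ⟨2 * (-1 - m * Real.sinh (P t)), deriv_seg2 hT hP t ht, fun hle => ?_⟩
        have hs := sinh_sub_le (x := P t) (y := -A) (B := B) hle ((hPB t).1) (by linarith)
        rw [Real.sinh_neg, hsinhA] at hs
        have : (2:ℝ) * (-1 - m * Real.sinh (P t)) = 2*m*(-(1/m) - Real.sinh (P t)) := by
          field_simp
        rw [this, hLdef]
        nlinarith [hs]
      have h5 := hstay (2*T) (right_mem_Icc.2 (by linarith))
      have h4 : P (2*T) = - P T := by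
        have := hsym T; rwa [show T + T = 2*T by ring] at this
      rw [h4] at h5
      linarith
  have h2TT : P (2*T) = - P T := by
    have := hsym T; rwa [show T + T = 2*T by ring] at this
  -- step 2 : P stays above -A on [T,2T]
  have hstay2 : ∀ t ∈ Icc T (2*T), -A < P t := by
    have hb : ∀ t ∈ Icc T (2*T), -(P t) < A := by
      apply barrier (L := L) (f := fun t => -(P t)) (hP.1.neg.continuousOn) _
        (show -(P T) < A by linarith)
      intro t ht
      refine ⟨-(2 * (-1 - m * Real.sinh (P t))), (deriv_seg2 hT hP t ht).neg, fun hle => ?_⟩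
      have hle' : -(P t) ≤ A := hle
      have hge : -A ≤ P t := by linarith
      have hs := sinh_sub_le (x := -A) (y := P t) (B := B) hge (by linarith) ((hPB t).2)
      rw [Real.sinh_neg, hsinhA] at hs
      have : -((2:ℝ) * (-1 - m * Real.sinh (P t))) = 2*m*(Real.sinh (P t) - -(1/m)) := by
        field_simp; ring
      rw [this, hLdef]
      nlinarith [hs]
    intro t ht
    have := hb t ht
    linarith
  -- step 3 : P is antitone on [T,2T]
  have hanti : AntitoneOn P (Icc T (2*T)) := by
    apply anti_aux hP.1.continuousOn (deriv_seg2 hT hP)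
    intro t ht
    have h1 : -A < P t := hstay2 t ⟨ht.1.le, ht.2.le⟩
    have h2 : Real.sinh (-A) < Real.sinh (P t) := Real.sinh_lt_sinh.2 h1
    rw [Real.sinh_neg, hsinhA] at h2
    have : -1 < m * Real.sinh (P t) := by
      have := mul_lt_mul_of_pos_left h2 hm
      rw [mul_neg] at this
      field_simp at this
      linarith
    linarith
  -- step 4 : P < A on [2T, 3T]
  have hP2T : P (2*T) < A := by rw [h2TT]; linarith
  have hbar3 : ∀ t ∈ Icc (2*T) (3*T), P t < A := by
    apply barrier (L := L) hP.1.continuousOn _ hP2T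
    intro t ht
    refine ⟨2 * (1 - m * Real.sinh (P t)), deriv_seg3 hT hP t ht, fun hle => ?_⟩
    have hs := sinh_sub_le (x := P t) (y := A) (B := B) hle ((hPB t).1) hAB
    rw [hsinhA] at hs
    have : (2:ℝ) * (1 - m * Real.sinh (P t)) = 2*m*((1/m) - Real.sinh (P t)) := by
      field_simp
    rw [this, hLdef]
    nlinarith [hs]
  -- step 5 : the max is attained at T
  have hMT : M = P T := by
    rcases le_or_gt ts (2*T) with hle | hgt
    · -- ts ∈ [T, 2T] : P antitone there so P ts ≤ P T
      have := hanti (left_mem_Icc.2 (by linarith)) ⟨hts.1, hle⟩ hts.1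
      exact le_antisymm (by simpa [hMdef] using this) (hub T)
    · rcases eq_or_lt_of_le hts.2 with heq3 | hlt3
      · -- ts = 3T
        have : P (3*T) = P T := by
          have := hPp T; rwa [show T + 2*T = 3*T by ring] at this
        rw [hMdef, heq3, this]
      · -- ts ∈ (2T, 3T) : interior max gives m sinh M = 1, contradicting P ts < A
        exfalso
        have hloc : IsLocalMax P ts := by
          apply IsMaxOn.isLocalMax (s := univ) _ univ_mem
          intro x _
          exact hub x
        have hz := hloc.hasDerivAt_eq_zero (deriv_seg3 hT hP ts ⟨hgt, hlt3⟩)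
        have hMA : Real.sinh M < Real.sinh A :=
          Real.sinh_lt_sinh.2 (hbar3 ts ⟨hgt.le, hlt3.le⟩)
        rw [hsinhA] at hMA
        have : m * Real.sinh M = 1 := by
          have : (1 : ℝ) - m * Real.sinh (P ts) = 0 := by linarith [hz]
          rw [hMdef]; linarith
        have : m * Real.sinh M < 1 := by
          calc m * Real.sinh M < m * (1/m) := mul_lt_mul_of_pos_left hMA hm
            _ = 1 := by field_simp
        linarith
  refine ⟨fun t => hMT ▸ hub t, ?_, hMT ▸ hM0⟩
  have : P (3*T) < A := hbar3 (3*T) (right_mem_Icc.2 (by linarith))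
  have h3T : P (3*T) = P T := by
    have := hPp T; rwa [show T + 2*T = 3*T by ring] at this
  rw [← h3T]; exact this

theorem statement8 (ε m T : ℝ) (hε : 0 < ε) (hε1 : ε ≤ 1) (hm : 0 < m) (hT : 0 < T)
    (P : ℝ → ℝ) (hP : IsSolF m T P) (hPper : Function.Periodic P (2 * T)) :
    DeltaP ε m T P =
      (1 / T) * Real.log ((1 + m * Real.sinh (sSup (Set.range P))) /
        (1 - m * Real.sinh (sSup (Set.range P)))) - 2 * (m + ε) := by
  obtain ⟨hub, hMA, hM0⟩ := max_lemma hm hT hP hPper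
  have hsym := sol_sym hm hT hP hPper
  have hsup : sSup (Set.range P) = P T := by
    apply IsGreatest.csSup_eq
    exact ⟨mem_range_self T, by rintro y ⟨t, rfl⟩; exact hub t⟩
  have hsinhA : Real.sinh (Real.arsinh (1/m)) = 1/m := Real.sinh_arsinh _
  set σ := m * Real.sinh (P T) with hσdef
  have hσ1 : σ < 1 := by
    have h1 : Real.sinh (P T) < 1/m := by
      rw [← hsinhA]; exact Real.sinh_lt_sinh.2 hMA
    calc σ < m * (1/m) := mul_lt_mul_of_pos_left h1 hm
      _ = 1 := by field_simp
  have hσ0 : 0 ≤ σ := mul_nonneg hm.le (Real.sinh_nonneg_iff.2 hM0)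
  have hP0 : P 0 = - P T := by
    have := hsym 0; rw [zero_add] at this; linarith
  have hP2T : P (2*T) = P 0 := by
    have := hPper 0; rw [zero_add] at this; exact this
  -- pointwise positivity
  have hpos1 : ∀ t, 0 < 1 - m * Real.sinh (P t) := by
    intro t
    have h1 : Real.sinh (P t) ≤ Real.sinh (P T) := Real.sinh_le_sinh.2 (hub t)
    have h2 : m * Real.sinh (P t) ≤ σ := mul_le_mul_of_nonneg_left h1 hm.le
    linarith
  have hpos2 : ∀ t, 0 < 1 + m * Real.sinh (P t) := by
    intro t
    have hlo : - P T ≤ P t := by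
      have h1 := hub (t + T)
      have h2 := hsym t
      rw [h2] at h1; linarith
    have h1 : Real.sinh (-(P T)) ≤ Real.sinh (P t) := Real.sinh_le_sinh.2 hlo
    rw [Real.sinh_neg] at h1
    have h2 : -σ ≤ m * Real.sinh (P t) := by
      have := mul_le_mul_of_nonneg_left h1 hm.le
      rw [mul_neg] at this; linarith
    linarith
  have hcont2m : Continuous (fun s => 2 * m * Real.cosh (P s)) :=
    (continuous_const.mul (Real.continuous_cosh.comp hP.1))
  -- FTC on [0, T]
  have hFTC1 : ∫ s in (0:ℝ)..T, 2 * m * Real.cosh (P s) =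
      (-Real.log (1 - m * Real.sinh (P T))) - (-Real.log (1 - m * Real.sinh (P 0))) := by
    apply intervalIntegral.integral_eq_sub_of_hasDeriv_right_of_le hT.le
    · exact ((continuousOn_const.sub (continuousOn_const.mul
        ((Real.continuous_sinh.comp hP.1).continuousOn))).log (fun t _ => (hpos1 t).ne')).neg
    · intro x hx
      have hPd := deriv_seg1 hT hP x hx
      have hinner : HasDerivAt (fun t => 1 - m * Real.sinh (P t))
          (-(m * (Real.cosh (P x) * (2 * (1 - m * Real.sinh (P x)))))) x := by
        simpa using ((hPd.sinh).const_mul m).const_sub 1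
      have hlog := (hinner.log (hpos1 x).ne').neg
      have : -(-(m * (Real.cosh (P x) * (2 * (1 - m * Real.sinh (P x))))) /
          (1 - m * Real.sinh (P x))) = 2 * m * Real.cosh (P x) := by
        have hD := (hpos1 x).ne'
        field_simp
      rw [this] at hlog
      exact hlog.hasDerivWithinAt
    · exact hcont2m.intervalIntegrable _ _
  -- FTC on [T, 2T]
  have hFTC2 : ∫ s in T..(2*T), 2 * m * Real.cosh (P s) =
      (-Real.log (1 + m * Real.sinh (P (2*T)))) - (-Real.log (1 + m * Real.sinh (P T))) := by
    apply intervalIntegral.integral_eq_sub_of_hasDeriv_right_of_le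
      (f := fun t => -Real.log (1 + m * Real.sinh (P t))) (by linarith : T ≤ 2*T)
    · exact ((continuousOn_const.add (continuousOn_const.mul
        ((Real.continuous_sinh.comp hP.1).continuousOn))).log (fun t _ => (hpos2 t).ne')).neg
    · intro x hx
      have hPd := deriv_seg2 hT hP x hx
      have hinner : HasDerivAt (fun t => 1 + m * Real.sinh (P t))
          (m * (Real.cosh (P x) * (2 * (-1 - m * Real.sinh (P x))))) x := by
        simpa using ((hPd.sinh).const_mul m).const_add 1
      have hlog := (hinner.log (hpos2 x).ne').neg
      have : -((m * (Real.cosh (P x) * (2 * (-1 - m * Real.sinh (P x))))) /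
          (1 + m * Real.sinh (P x))) = 2 * m * Real.cosh (P x) := by
        have hD := (hpos2 x).ne'
        field_simp
        ring
      rw [this] at hlog
      exact hlog.hasDerivWithinAt
    · exact hcont2m.intervalIntegrable _ _
  have hsinh0 : Real.sinh (P 0) = - Real.sinh (P T) := by rw [hP0, Real.sinh_neg]
  have htotal : ∫ s in (0:ℝ)..(2*T), 2 * m * Real.cosh (P s) =
      2 * (Real.log (1 + σ) - Real.log (1 - σ)) := by
    rw [← intervalIntegral.integral_add_adjacent_intervals
      (hcont2m.intervalIntegrable 0 T) (hcont2m.intervalIntegrable T (2*T)),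
      hFTC1, hFTC2, hP2T, hsinh0]
    ring_nf
    rw [hσdef]; ring
  -- assemble
  have h1pos : 0 < 1 + σ := by linarith
  have h2pos : 0 < 1 - σ := by linarith
  have hlogdiv : Real.log ((1 + σ) / (1 - σ)) = Real.log (1 + σ) - Real.log (1 - σ) :=
    Real.log_div h1pos.ne' h2pos.ne'
  have hintrw : (fun s => 2 * (m * Real.cosh (P s) - m - ε)) =
      fun s => (2 * m * Real.cosh (P s)) - 2 * (m + ε) := by funext s; ring
  rw [DeltaP, hsup, ← hσdef, hlogdiv, hintrw,
    intervalIntegral.integral_sub (hcont2m.intervalIntegrable _ _)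
      (intervalIntegrable_const), htotal, intervalIntegral.integral_const]
  have hT' : T ≠ 0 := hT.ne'
  field_simp
  ring
end

section
/- Let 0 < ε ≤ 1, m > 0 and T > 0. Set b = e^{T√(1+m²)} and C = m²b⁴ + 2m²b² + 4b² + m². Then Δ(ε,m,T) = (1/T)·ln((m²b⁴ + 2b² + m² + m(b² − 1)√C)/(2(1 + m²)b²)) − 2(m + ε). -/
open Real Filter Set

lemma sq_pos {T t : ℝ} (hT : 0 < T) (h : t ∈ Ioo 0 T) : squareWave T t = 1 := by
  have h2T : 0 < 2*T := by linarith
  have hx1 : (0:ℝ) ≤ t / (2*T) := div_nonneg h.1.le h2T.le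
  have hfr : Int.fract (t / (2*T)) = t / (2*T) :=
    Int.fract_eq_self.2 ⟨hx1, by rw [div_lt_one h2T]; linarith [h.2]⟩
  have hlt : t / (2*T) < 1/2 := by rw [div_lt_div_iff₀ h2T (by norm_num)]; linarith [h.2]
  rw [squareWave, if_pos (by rw [hfr]; exact hlt)]

lemma sq_neg' {T t : ℝ} (hT : 0 < T) (h : t ∈ Ioo (-T) 0) : squareWave T t = -1 := by
  have h2T : 0 < 2*T := by linarith
  have hx1 : (0:ℝ) ≤ t / (2*T) + 1 := by
    have : -(1:ℝ) ≤ t / (2*T) := by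
      rw [neg_le, ← neg_div, div_le_one h2T]; linarith [h.1]
    linarith
  have hx2 : t / (2*T) + 1 < 1 := by
    have : t / (2*T) < 0 := div_neg_of_neg_of_pos h.2 h2T
    linarith
  have hfr : Int.fract (t / (2*T)) = t / (2*T) + 1 := by
    have h1 : Int.fract (t / (2*T) + ((1:ℤ):ℝ)) = Int.fract (t / (2*T)) :=
      Int.fract_add_intCast _ 1
    push_cast at h1
    rw [← h1]
    exact Int.fract_eq_self.2 ⟨hx1, hx2⟩
  have hge : ¬ (Int.fract (t / (2*T)) < 1/2) := by
    rw [hfr]; push_neg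
    have : -(1:ℝ)/2 ≤ t / (2*T) := by
      rw [div_le_div_iff₀ (by norm_num) h2T]; linarith [h.1]
    linarith
  rw [squareWave, if_neg hge]

lemma sq_neg2 {T t : ℝ} (hT : 0 < T) (h : t ∈ Ioo T (2*T)) : squareWave T t = -1 := by
  have h2T : 0 < 2*T := by linarith
  have hx1 : (1:ℝ)/2 ≤ t / (2*T) := by
    rw [div_le_div_iff₀ (by norm_num) h2T]; linarith [h.1]
  have hx2 : t / (2*T) < 1 := by rw [div_lt_one h2T]; exact h.2
  have hfr : Int.fract (t / (2*T)) = t / (2*T) := Int.fract_eq_self.2 ⟨by linarith, hx2⟩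
  rw [squareWave, if_neg (by rw [hfr]; push_neg; exact hx1)]

-- not a switching time
lemma not_switch {T t : ℝ} (hT : 0 < T) (h1 : 0 < t) (h2 : t < T) : ∀ n : ℤ, t ≠ n * T := by
  intro n hn
  rcases Int.lt_or_le n 1 with hn1 | hn1
  · have : (n:ℝ) ≤ 0 := by exact_mod_cast Int.lt_add_one_iff.mp hn1
    nlinarith
  · have : (1:ℝ) ≤ (n:ℝ) := by exact_mod_cast hn1
    nlinarith

lemma not_switch2 {T t : ℝ} (hT : 0 < T) (h1 : T < t) (h2 : t < 2*T) : ∀ n : ℤ, t ≠ n * T := by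
  intro n hn
  rcases Int.lt_or_le n 2 with hn1 | hn1
  · have : (n:ℝ) ≤ 1 := by exact_mod_cast Int.lt_add_one_iff.mp hn1
    nlinarith
  · have : (2:ℝ) ≤ (n:ℝ) := by exact_mod_cast hn1
    nlinarith

lemma not_switch' {T t : ℝ} (hT : 0 < T) (h1 : -T < t) (h2 : t < 0) : ∀ n : ℤ, t ≠ n * T := by
  intro n hn
  rcases Int.lt_or_le n 0 with hn1 | hn1
  · have : (n:ℝ) ≤ -1 := by exact_mod_cast Int.lt_add_one_iff.mp (by omega : n < -1 + 1)
    nlinarith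
  · have : (0:ℝ) ≤ (n:ℝ) := by exact_mod_cast hn1
    nlinarith

-- derivative transfer along periodicity
lemma periodic_hasDerivAt {V : ℝ → ℝ} {c d t : ℝ} (hper : Function.Periodic V c)
    (h : HasDerivAt V d (t + c)) : HasDerivAt V d t := by
  have h2 : HasDerivAt (fun s => V (s + c)) d t := by
    have := h.comp t ((hasDerivAt_id t).add_const c)
    simpa [Function.comp_def] using this
  have : (fun s => V (s + c)) = V := funext fun s => hper s
  rwa [this] at h2

-- left MVT bound at a global max
lemma mvt_left {m u₀ τ δ : ℝ} {V : ℝ → ℝ} (hδ : 0 < δ) (hc : Continuous V)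
    (hd : ∀ t ∈ Ioo (τ - δ) τ, HasDerivAt V (2*(u₀ - m * Real.sinh (V t))) t)
    (hmax : ∀ s, V s ≤ V τ) : m * Real.sinh (V τ) ≤ u₀ := by
  by_contra hcon
  push_neg at hcon
  have hφ : Continuous fun t => m * Real.sinh (V t) := by continuity
  have hev : ∀ᶠ t in nhds τ, u₀ < m * Real.sinh (V t) :=
    (hφ.continuousAt).eventually_const_lt hcon
  rw [Metric.eventually_nhds_iff]
  at hev
  obtain ⟨δ2, hδ2, hball⟩ := hev
  set a := τ - min δ δ2 / 2 with ha
  have hmin : 0 < min δ δ2 := lt_min hδ hδ2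
  have haτ : a < τ := by simp only [ha]; linarith
  obtain ⟨c, hcmem, hceq⟩ := exists_hasDerivAt_eq_slope V (fun t => 2*(u₀ - m * Real.sinh (V t)))
    haτ (hc.continuousOn)
    (fun x hx => hd x ⟨by simp only [ha] at hx; have := hx.1; have h2 : min δ δ2 ≤ δ := min_le_left _ _; linarith, hx.2⟩)
  have hslope : 0 ≤ (V τ - V a) / (τ - a) :=
    div_nonneg (by linarith [hmax a]) (by linarith)
  have h1 : u₀ < m * Real.sinh (V c) := by
    apply hball
    have h2 : min δ δ2 ≤ δ2 := min_le_right _ _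
    have := hcmem.1; have := hcmem.2
    rw [Real.dist_eq, abs_lt]
    constructor <;> simp only [ha] at * <;> linarith
  rw [← hceq] at hslope
  linarith

-- the "touching the equilibrium" rigidity lemma
lemma touch {m T M : ℝ} {V : ℝ → ℝ} (hm : 0 < m) (hT : 0 < T) (hc : Continuous V)
    (hd1 : ∀ t ∈ Ioo (0:ℝ) T, HasDerivAt V (2*(1 - m * Real.sinh (V t))) t)
    (hM : m * Real.sinh M = 1) {t₁ : ℝ} (ht₁ : t₁ ∈ Ioc (0:ℝ) T) (hV1 : V t₁ = M) :
    V 0 = M := by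
  set wp := Real.exp M with hwp
  have hwppos : 0 < wp := Real.exp_pos M
  set lam : ℝ → ℝ := fun s => m * (Real.exp (V s) + wp⁻¹) with hlam
  have hlamc : Continuous lam := by fun_prop
  set Lam : ℝ → ℝ := fun t => ∫ s in (0:ℝ)..t, lam s with hLam
  have hLamc : Continuous Lam :=
    intervalIntegral.continuous_primitive (fun a b => hlamc.intervalIntegrable a b) 0
  have hLamd : ∀ t : ℝ, HasDerivAt Lam (lam t) t := by
    intro t
    exact intervalIntegral.integral_hasDerivAt_right (hlamc.intervalIntegrable 0 t)
      (hlamc.stronglyMeasurableAtFilter _ _) hlamc.continuousAt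
  set h : ℝ → ℝ := fun t => (wp - Real.exp (V t)) * Real.exp (Lam t) with hh
  have hhc : Continuous h := by fun_prop
  have hhd : ∀ t ∈ Ioo (0:ℝ) T, HasDerivAt h 0 t := by
    intro t ht
    have hw := (hd1 t ht).exp
    have hE := (hLamd t).exp
    have hd := ((hasDerivAt_const t wp).sub hw).mul hE
    have hs2 : Real.sinh M = (wp - wp⁻¹) / 2 := by
      rw [Real.sinh_eq, Real.exp_neg, hwp]
    have hM' : m * (wp * wp - 1) = 2 * wp := by
      rw [hs2] at hM
      field_simp at hM
      linarith
    have hs1 : Real.sinh (V t) = (Real.exp (V t) - (Real.exp (V t))⁻¹) / 2 := by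
      rw [Real.sinh_eq, Real.exp_neg]
    have hwpos : (0:ℝ) < Real.exp (V t) := Real.exp_pos _
    have halg : (0 - Real.exp (V t) * (2 * (1 - m * Real.sinh (V t)))) * Real.exp (Lam t) +
        (wp - Real.exp (V t)) * (Real.exp (Lam t) * lam t) = 0 := by
      rw [hs1, hlam]
      field_simp
      linear_combination (Real.exp (Lam t) * Real.exp (V t)) * hM'
    exact halg ▸ hd
  have hconst : ∀ t ∈ Icc (0:ℝ) T, h t = h 0 := by
    intro t ht
    have hint : ∫ s in (0:ℝ)..t, (0:ℝ) = h t - h 0 := by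
      apply intervalIntegral.integral_eq_sub_of_hasDeriv_right_of_le ht.1 hhc.continuousOn
      · intro x hx
        exact (hhd x ⟨hx.1, lt_of_lt_of_le hx.2 ht.2⟩).hasDerivWithinAt
      · exact intervalIntegrable_const
    simp at hint
    linarith
  have h1 : h t₁ = 0 := by
    simp only [hh, hV1, hwp, sub_self, zero_mul]
  have h0 : h 0 = 0 := by rw [← hconst t₁ ⟨ht₁.1.le, ht₁.2⟩, h1]
  have : wp - Real.exp (V 0) = 0 := by
    have := Real.exp_pos (Lam 0)
    rcases mul_eq_zero.mp h0 with h | h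
    · exact h
    · linarith
  have : Real.exp (V 0) = Real.exp M := by rw [hwp] at this; linarith
  exact Real.exp_injective this
lemma bound_lt {m T : ℝ} {V : ℝ → ℝ} (hm : 0 < m) (hT : 0 < T) (hc : Continuous V)
    (hper : Function.Periodic V (2*T))
    (hd1 : ∀ t ∈ Ioo (0:ℝ) T, HasDerivAt V (2*(1 - m * Real.sinh (V t))) t)
    (hd2 : ∀ t ∈ Ioo (-T) (0:ℝ), HasDerivAt V (2*(-1 - m * Real.sinh (V t))) t)
    (hd3 : ∀ t ∈ Ioo T (2*T), HasDerivAt V (2*(-1 - m * Real.sinh (V t))) t) :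
    ∀ t, m * Real.sinh (V t) < 1 := by
  have h2T : (0:ℝ) < 2*T := by linarith
  obtain ⟨t₀, ht₀mem, hmax⟩ := isCompact_Icc.exists_isMaxOn (nonempty_Icc.mpr h2T.le)
    hc.continuousOn (f := V)
  set M := V t₀ with hM
  have hglob : ∀ s, V s ≤ M := by
    intro s
    have hfr : s - ⌊s / (2*T)⌋ * (2*T) ∈ Icc 0 (2*T) := by
      constructor
      · have := Int.sub_floor_div_mul_nonneg s h2T
        linarith [this]
      · have := Int.sub_floor_div_mul_lt s h2T
        linarith [this]
    have := hper.sub_int_mul_eq (x := s) (n := ⌊s / (2*T)⌋)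
    calc V s = V (s - ⌊s / (2*T)⌋ * (2*T)) := this.symm
    _ ≤ M := hmax hfr
  -- if V 0 = M we get a strong bound
  have hzero : V 0 = M → m * Real.sinh M ≤ -1 := by
    intro h0
    have := mvt_left (m := m) (u₀ := -1) (τ := 0) (δ := T) hT hc
      (by intro t ht; exact hd2 t (by simpa using ht))
      (by intro s; rw [h0]; exact hglob s)
    rwa [h0] at this
  have hstrict : m * Real.sinh M < 1 := by
    have hone : m * Real.sinh M = 1 → False := by
      intro heq
      have h0M : V 0 = M := by
        rcases lt_trichotomy t₀ T with h | h | h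
        · rcases eq_or_lt_of_le ht₀mem.1 with h00 | h00
          · exact congrArg V h00
          · exact touch hm hT hc hd1 heq (t₁ := t₀) ⟨h00, h.le⟩ rfl
        · exact touch hm hT hc hd1 heq (t₁ := T) ⟨hT, le_refl T⟩ (congrArg V h.symm)
        · rcases eq_or_lt_of_le ht₀mem.2 with h22 | h22
          · have hv2 : V (2*T) = V 0 := by
              have := hper 0; simpa using this
            calc V 0 = V (2*T) := hv2.symm
            _ = V t₀ := congrArg V h22.symm
          · -- interior of (T, 2T): derivative is zero there, contradiction
            have hloc : IsLocalMax V t₀ := Filter.Eventually.of_forall (fun x => hglob x)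
            have hz := hloc.hasDerivAt_eq_zero (hd3 t₀ ⟨h, h22⟩)
            exfalso
            have : m * Real.sinh M = -1 := by linarith [hz]
            rw [heq] at this; norm_num at this
      have := hzero h0M
      linarith
    rcases lt_trichotomy (m * Real.sinh M) 1 with h | h | h
    · exact h
    · exact absurd h hone
    · -- show ≤ 1 to contradict
      exfalso
      rcases lt_trichotomy t₀ T with hlt | heqT | hgt
      · rcases eq_or_lt_of_le ht₀mem.1 with h00 | h00
        · have := hzero (congrArg V h00); linarith
        · have hloc : IsLocalMax V t₀ := Filter.Eventually.of_forall (fun x => hglob x)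
          have hz := hloc.hasDerivAt_eq_zero (hd1 t₀ ⟨h00, hlt⟩)
          have : m * Real.sinh M = 1 := by linarith [hz]
          linarith
      · have hVT : V T = M := congrArg V heqT.symm
        have := mvt_left (m := m) (u₀ := 1) (τ := T) (δ := T) hT hc
          (by intro t ht; exact hd1 t (by simpa using ht))
          (by intro s; rw [hVT]; exact hglob s)
        rw [hVT] at this; linarith
      · rcases eq_or_lt_of_le ht₀mem.2 with h22 | h22
        · have h02 : V 0 = M := by
            have h5 : V (2*T) = V 0 := by have := hper 0; simpa using this
            calc V 0 = V (2*T) := h5.symm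
            _ = V t₀ := congrArg V h22.symm
          have := hzero h02; linarith
        · have hloc : IsLocalMax V t₀ := Filter.Eventually.of_forall (fun x => hglob x)
          have hz := hloc.hasDerivAt_eq_zero (hd3 t₀ ⟨hgt, h22⟩)
          have : m * Real.sinh M = -1 := by linarith [hz]
          linarith
  intro t
  have h1 : Real.sinh (V t) ≤ Real.sinh M := Real.sinh_le_sinh.mpr (hglob t)
  nlinarith [hglob t, hstrict, h1]

lemma phase_integral {m T : ℝ} {V : ℝ → ℝ} (hm : 0 < m) (hT : 0 < T) (hc : Continuous V)
    (hd1 : ∀ t ∈ Ioo (0:ℝ) T, HasDerivAt V (2*(1 - m * Real.sinh (V t))) t)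
    (hb : ∀ t, m * Real.sinh (V t) < 1) :
    ∫ s in (0:ℝ)..T, 2*(m * Real.cosh (V s))
      = Real.log (1 - m * Real.sinh (V 0)) - Real.log (1 - m * Real.sinh (V T)) := by
  set F : ℝ → ℝ := fun t => - Real.log (1 - m * Real.sinh (V t)) with hF
  have hpos : ∀ t, 0 < 1 - m * Real.sinh (V t) := fun t => by linarith [hb t]
  have hFc : Continuous F := by
    apply Continuous.neg
    exact Continuous.log (by fun_prop) (fun t => (hpos t).ne')
  have hFd : ∀ t ∈ Ioo (0:ℝ) T, HasDerivAt F (2*(m * Real.cosh (V t))) t := by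
    intro t ht
    have hinner := ((hd1 t ht).sinh.const_mul m).const_sub 1
    have hlog := (hinner.log (hpos t).ne').neg
    refine hlog.congr_deriv (Eq.symm ?_)
    field_simp [(hpos t).ne']
  have key : ∫ s in (0:ℝ)..T, 2*(m * Real.cosh (V s)) = F T - F 0 := by
    apply intervalIntegral.integral_eq_sub_of_hasDeriv_right_of_le hT.le hFc.continuousOn
      (fun x hx => (hFd x hx).hasDerivWithinAt)
    exact (by fun_prop : Continuous fun s => 2*(m * Real.cosh (V s))).intervalIntegrable 0 T
  rw [key, hF]
  ring

lemma phase_mobius {m T r : ℝ} {V : ℝ → ℝ} (hm : 0 < m) (hT : 0 < T) (hc : Continuous V)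
    (hr2 : r^2 = 1 + m^2) (hr1 : 1 < r)
    (hd1 : ∀ t ∈ Ioo (0:ℝ) T, HasDerivAt V (2*(1 - m * Real.sinh (V t))) t)
    (hb : ∀ t, m * Real.sinh (V t) < 1) :
    ((1+r) - m * Real.exp (V T)) * (m * Real.exp (V 0) - (1-r)) * Real.exp (T*r) ^ 2
      = ((1+r) - m * Real.exp (V 0)) * (m * Real.exp (V T) - (1-r)) := by
  set A : ℝ → ℝ := fun t => (1+r) - m * Real.exp (V t) with hA
  set B : ℝ → ℝ := fun t => m * Real.exp (V t) - (1-r) with hB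
  have hwpos : ∀ t, 0 < Real.exp (V t) := fun t => Real.exp_pos _
  have hBpos : ∀ t, 0 < B t := by
    intro t
    have := hwpos t
    simp only [hB]
    nlinarith
  have hApos : ∀ t, 0 < A t := by
    intro t
    have hs : Real.sinh (V t) = (Real.exp (V t) - (Real.exp (V t))⁻¹)/2 := by
      rw [Real.sinh_eq, Real.exp_neg]
    have hb' := hb t
    rw [hs] at hb'
    have hw := hwpos t
    have hq : m * (Real.exp (V t))^2 - 2*Real.exp (V t) - m < 0 := by
      have h2 : m * ((Real.exp (V t) - (Real.exp (V t))⁻¹)/2) < 1 := hb'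
      have h3 : m * (Real.exp (V t) - (Real.exp (V t))⁻¹) < 2 := by linarith
      have h4 : m * (Real.exp (V t) - (Real.exp (V t))⁻¹) * Real.exp (V t) < 2 * Real.exp (V t) :=
        mul_lt_mul_of_pos_right h3 hw
      have h5 : (Real.exp (V t))⁻¹ * Real.exp (V t) = 1 := inv_mul_cancel₀ (hwpos t).ne'
      nlinarith
    have hfac : (m * Real.exp (V t) - (1+r)) * (B t) = m * (m * (Real.exp (V t))^2 - 2*Real.exp (V t) - m) := by
      simp only [hB]
      linear_combination (-1 : ℝ) * hr2
    have hBt := hBpos t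
    simp only [hA]
    nlinarith [hfac, hq, hBt]
  set G : ℝ → ℝ := fun t => Real.log (A t) - Real.log (B t) + 2*r*t with hG
  have hGc : Continuous G := by
    apply Continuous.add
    apply Continuous.sub
    · exact Continuous.log (by fun_prop) (fun t => (hApos t).ne')
    · exact Continuous.log (by fun_prop) (fun t => (hBpos t).ne')
    · fun_prop
  have hGd : ∀ t ∈ Ioo (0:ℝ) T, HasDerivAt G 0 t := by
    intro t ht
    have hw : HasDerivAt (fun s => Real.exp (V s)) (2*(1 - m * Real.sinh (V t)) * Real.exp (V t)) t := by
      have := (hd1 t ht).exp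
      convert this using 1
      ring
    have hAd : HasDerivAt A (-(m * (2*(1 - m * Real.sinh (V t)) * Real.exp (V t)))) t :=
      (hw.const_mul m).const_sub (1+r)
    have hBd : HasDerivAt B (m * (2*(1 - m * Real.sinh (V t)) * Real.exp (V t))) t :=
      (hw.const_mul m).sub_const (1-r)
    have hGd' := ((hAd.log (hApos t).ne').sub (hBd.log (hBpos t).ne')).add
      ((hasDerivAt_id t).const_mul (2*r))
    refine hGd'.congr_deriv (Eq.symm ?_)
    have hs : Real.sinh (V t) = (Real.exp (V t) - (Real.exp (V t))⁻¹)/2 := by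
      rw [Real.sinh_eq, Real.exp_neg]
    have hkey : m * (2*(1 - m * Real.sinh (V t)) * Real.exp (V t)) = A t * B t := by
      rw [hs]
      simp only [hA, hB]
      have h5 : (Real.exp (V t))⁻¹ * Real.exp (V t) = 1 := inv_mul_cancel₀ (hwpos t).ne'
      field_simp
      linear_combination (-1:ℝ) * hr2
    rw [hkey]
    field_simp [(hApos t).ne', (hBpos t).ne']
    ring
  have key : ∫ s in (0:ℝ)..T, (0:ℝ) = G T - G 0 := by
    apply intervalIntegral.integral_eq_sub_of_hasDeriv_right_of_le hT.le hGc.continuousOn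
      (fun x hx => (hGd x hx).hasDerivWithinAt)
    exact intervalIntegrable_const
  simp only [intervalIntegral.integral_zero] at key
  have hGT : G T = G 0 := by linarith
  simp only [hG] at hGT
  have hexp := congrArg Real.exp hGT
  rw [Real.exp_add, Real.exp_sub, Real.exp_add, Real.exp_sub,
    Real.exp_log (hApos T), Real.exp_log (hBpos T),
    Real.exp_log (hApos 0), Real.exp_log (hBpos 0)] at hexp
  simp only [mul_zero, Real.exp_zero, mul_one] at hexp
  have h2 : Real.exp (2*r*T) = Real.exp (T*r) ^ 2 := by
    rw [← Real.exp_nat_mul]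
    · ring_nf
  have hB0 := hBpos 0
  have hBT := hBpos T
  field_simp at hexp
  rw [h2] at hexp
  simp only [hA, hB] at hexp ⊢
  nlinarith [hexp]

set_option maxHeartbeats 2000000 in
theorem statement9 (ε m T : ℝ) (hε : 0 < ε) (hε1 : ε ≤ 1) (hm : 0 < m) (hT : 0 < T)
    (P : ℝ → ℝ) (hP : IsSolF m T P) (hPper : Function.Periodic P (2 * T))
    (b C : ℝ) (hb : b = Real.exp (T * Real.sqrt (1 + m ^ 2)))
    (hC : C = m ^ 2 * b ^ 4 + 2 * m ^ 2 * b ^ 2 + 4 * b ^ 2 + m ^ 2) :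
    DeltaP ε m T P =
      (1 / T) * Real.log ((m ^ 2 * b ^ 4 + 2 * b ^ 2 + m ^ 2 +
        m * (b ^ 2 - 1) * Real.sqrt C) / (2 * (1 + m ^ 2) * b ^ 2)) - 2 * (m + ε) := by
  have hc : Continuous P := hP.1
  set r : ℝ := Real.sqrt (1 + m^2) with hrdef
  have hr2 : r^2 = 1 + m^2 := Real.sq_sqrt (by positivity)
  have hr0 : 0 ≤ r := Real.sqrt_nonneg _
  have hr1 : 1 < r := by nlinarith
  have hbexp : b = Real.exp (T*r) := hb
  have hb1 : 1 < b := by rw [hbexp]; calc (1:ℝ) = Real.exp 0 := Real.exp_zero.symm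
                                          _ < Real.exp (T*r) := by
                                            apply Real.exp_lt_exp.2; positivity
  -- derivatives of P on the three windows
  have hd1P : ∀ t ∈ Ioo (0:ℝ) T, HasDerivAt P (2*(1 - m * Real.sinh (P t))) t := by
    intro t ht
    have := hP.2 t (not_switch hT ht.1 ht.2)
    rwa [sq_pos hT ht] at this
  have hd2P : ∀ t ∈ Ioo (-T) (0:ℝ), HasDerivAt P (2*(-1 - m * Real.sinh (P t))) t := by
    intro t ht
    have := hP.2 t (not_switch' hT ht.1 ht.2)
    rwa [sq_neg' hT ht] at this
  have hd3P : ∀ t ∈ Ioo T (2*T), HasDerivAt P (2*(-1 - m * Real.sinh (P t))) t := by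
    intro t ht
    have := hP.2 t (not_switch2 hT ht.1 ht.2)
    rwa [sq_neg2 hT ht] at this
  -- the reflected solution Q
    
  set Q : ℝ → ℝ := fun t => - P (t - T) with hQ
  have hcQ : Continuous Q := by fun_prop
  have hperQ : Function.Periodic Q (2*T) := by
    intro t
    simp only [hQ]
    have : t + 2*T - T = (t - T) + 2*T := by ring
    rw [this, hPper (t - T)]
  have hQtrans : ∀ t d : ℝ, HasDerivAt P d (t - T) → HasDerivAt Q (-d) t := by
    intro t d h
    have h2 := (h.comp t ((hasDerivAt_id t).sub_const T)).neg
    exact (by simpa [Function.comp_def] using h2 : HasDerivAt (-fun x => P (x - T)) (-d) t)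
  have hd1Q : ∀ t ∈ Ioo (0:ℝ) T, HasDerivAt Q (2*(1 - m * Real.sinh (Q t))) t := by
    intro t ht
    have hmem : t - T ∈ Ioo (-T) (0:ℝ) := ⟨by linarith [ht.1], by linarith [ht.2]⟩
    have := hQtrans t _ (hd2P _ hmem)
    convert this using 1
    simp only [hQ, Real.sinh_neg]
    ring
  have hd3Q : ∀ t ∈ Ioo T (2*T), HasDerivAt Q (2*(-1 - m * Real.sinh (Q t))) t := by
    intro t ht
    have hmem : t - T ∈ Ioo (0:ℝ) T := ⟨by linarith [ht.1], by linarith [ht.2]⟩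
    have := hQtrans t _ (hd1P _ hmem)
    convert this using 1
    simp only [hQ, Real.sinh_neg]
    ring
  have hd2Q : ∀ t ∈ Ioo (-T) (0:ℝ), HasDerivAt Q (2*(-1 - m * Real.sinh (Q t))) t := by
    intro t ht
    have hmem : t + T ∈ Ioo (0:ℝ) T := ⟨by linarith [ht.1], by linarith [ht.2]⟩
    have hder : HasDerivAt P (2*(1 - m * Real.sinh (P (t+T)))) (t - T) := by
      apply periodic_hasDerivAt hPper
      have : t - T + 2*T = t + T := by ring
      rw [this]
      exact hd1P _ hmem
    have := hQtrans t _ hder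
    have hPeq : P (t - T) = P (t + T) := by
      have := hPper (t - T)
      rw [show t - T + 2*T = t + T by ring] at this
      exact this.symm
    convert this using 1
    simp only [hQ, Real.sinh_neg, hPeq]
    ring
  -- global bounds
  have hbP : ∀ t, m * Real.sinh (P t) < 1 := bound_lt hm hT hc hPper hd1P hd2P hd3P
  have hbQ : ∀ t, m * Real.sinh (Q t) < 1 := bound_lt hm hT hcQ hperQ hd1Q hd2Q hd3Q
  have hbP' : ∀ t, -1 < m * Real.sinh (P t) := by
    intro t
    have := hbQ (t + T)
    simp only [hQ, add_sub_cancel_right, Real.sinh_neg] at this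
    linarith
  -- endpoint values
  set xv := Real.exp (P 0) with hxv
  set yv := Real.exp (P T) with hyv
  have hxvp : 0 < xv := Real.exp_pos _
  have hyvp : 0 < yv := Real.exp_pos _
  have M1 := phase_mobius hm hT hc hr2 hr1 hd1P hbP
  have M2 := phase_mobius (V := Q) hm hT hcQ hr2 hr1 hd1Q hbQ
  have hQT : Q T = - P 0 := by simp [hQ]
  have hQ0 : Q 0 = - P T := by
    simp only [hQ, zero_sub]
    have h9 := hPper (-T)
    rw [show -T + 2*T = T by ring] at h9
    rw [h9]
  rw [hQ0, hQT, Real.exp_neg, Real.exp_neg] at M2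
  rw [← hbexp] at M1 M2
  rw [← hxv, ← hyv] at M1 M2
  field_simp at M2
  have M2' : ((1+r)*xv - m)*(m - yv*(1-r))*b^2 = ((1+r)*yv - m)*(m - xv*(1-r)) :=
    mul_right_cancel₀ (by positivity : (xv*yv) ≠ 0)
      (by linear_combination (xv*yv) * M2)
  have hb2 : 0 < b^2 - 1 := by nlinarith
  have hkey : (b^2-1)*((m^2 - (1-r)*(1+r))*(1 - xv*yv)) = 0 := by
    linear_combination M1 - M2'
  have h3 : ((b^2-1)*(2*m^2))*(1 - xv*yv) = 0 := by
    linear_combination hkey - ((b^2-1)*(1-xv*yv))*hr2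
  have hxy : xv * yv = 1 := by
    have hne : (b^2-1)*(2*m^2) ≠ 0 := by positivity
    rcases mul_eq_zero.mp h3 with h | h
    · exact absurd h hne
    · linarith
  have hyx : yv = xv⁻¹ := by
    field_simp
    linear_combination hxy
  rw [hyx] at M1
  field_simp at M1
  -- M1 : ((1+r)*xv - m) * (m*xv - (1-r)) * b^2 = (1+r - m*xv) * (m - xv*(1-r))
  set g : ℝ := (b^2-1) + r*(b^2+1) with hgdef
  have hgpos : 0 < g := by nlinarith
  have hkey2 : m*(xv^2*g - (r*(b^2+1) - (b^2-1))) = 0 := by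
    rw [hgdef]
    linear_combination M1 + (xv*(1-b^2))*hr2
  have hrho : xv^2*g = r*(b^2+1) - (b^2-1) := by
    rcases mul_eq_zero.mp hkey2 with h | h
    · exact absurd h hm.ne'
    · linarith
  have hCg : C = (xv*g)^2 := by
    rw [hgdef] at hrho ⊢
    linear_combination hC - ((b^2-1) + r*(b^2+1))*hrho - (b^2+1)^2*hr2
  have hsC : Real.sqrt C = xv*g := by
    rw [hCg, Real.sqrt_sq (by positivity)]
  -- key polynomial identity
  have KEY : (2*xv - m*(xv^2-1)) * (2*(1+m^2)*b^2)
      = ((m^2*b^4+2*b^2+m^2) + m*(b^2-1)*(xv*g)) * (2*xv + m*(xv^2-1)) := by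
    apply mul_right_cancel₀ (ne_of_gt hgpos)
    rw [hgdef] at hrho ⊢
    linear_combination ((-2)*m + 2*m*r + (-2)*m*b^4 + (-2)*m*b^4*r + (-1)*m^2*xv + m^2*r*xv
        + 2*m^2*b^2*xv + (-1)*m^2*b^4*xv + (-1)*m^2*b^4*r*xv + (-1)*m^3 + (-2)*m^3*b^2
        + (-1)*m^3*b^4) * hrho
      + (2*m + 2*m*b^2 + (-2)*m*b^4 + (-2)*m*b^6) * hr2
  -- sinh values
  have hsinh0 : Real.sinh (P 0) = (xv - xv⁻¹)/2 := by
    rw [Real.sinh_eq, Real.exp_neg, hxv]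
  have hsinhT : Real.sinh (P T) = - Real.sinh (P 0) := by
    rw [Real.sinh_eq, Real.sinh_eq, Real.exp_neg, Real.exp_neg, ← hxv, ← hyv, hyx, inv_inv]
    ring
  set σ : ℝ := m * Real.sinh (P 0) with hσ
  have hσ1 : σ < 1 := hbP 0
  have hσ2 : -1 < σ := hbP' 0
  have e1 : (2*xv)*(1-σ) = 2*xv - m*(xv^2-1) := by
    rw [hσ, hsinh0]
    field_simp
  have e2 : (2*xv)*(1+σ) = 2*xv + m*(xv^2-1) := by
    rw [hσ, hsinh0]
    field_simp
  have hfinal : (1 - σ) * (2*(1+m^2)*b^2)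
      = ((m^2*b^4+2*b^2+m^2) + m*(b^2-1)*Real.sqrt C) * (1 + σ) := by
    rw [hsC]
    apply mul_left_cancel₀ (by positivity : (2*xv) ≠ 0)
    calc (2*xv)*((1-σ)*(2*(1+m^2)*b^2)) = ((2*xv)*(1-σ))*(2*(1+m^2)*b^2) := by ring
    _ = (2*xv - m*(xv^2-1))*(2*(1+m^2)*b^2) := by rw [e1]
    _ = ((m^2*b^4+2*b^2+m^2) + m*(b^2-1)*(xv*g)) * (2*xv + m*(xv^2-1)) := KEY
    _ = ((m^2*b^4+2*b^2+m^2) + m*(b^2-1)*(xv*g)) * ((2*xv)*(1+σ)) := by rw [e2]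
    _ = (2*xv)*(((m^2*b^4+2*b^2+m^2) + m*(b^2-1)*(xv*g))*(1+σ)) := by ring
  have hdenpos : (0:ℝ) < 2*(1+m^2)*b^2 := by positivity
  have h1σ : 0 < 1 - σ := by linarith
  have h2σ : 0 < 1 + σ := by linarith
  have hfrac : (m^2*b^4+2*b^2+m^2 + m*(b^2-1)*Real.sqrt C) / (2*(1+m^2)*b^2)
      = (1-σ)/(1+σ) := by
    rw [div_eq_div_iff hdenpos.ne' h2σ.ne']
    linarith [hfinal]
  have hlog : Real.log ((m^2*b^4+2*b^2+m^2 + m*(b^2-1)*Real.sqrt C) / (2*(1+m^2)*b^2))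
      = Real.log (1-σ) - Real.log (1+σ) := by
    rw [hfrac, Real.log_div h1σ.ne' h2σ.ne']
  -- integrals
  have I1 := phase_integral hm hT hc hd1P hbP
  have I2 := phase_integral (V := Q) hm hT hcQ hd1Q hbQ
  rw [hQ0, hQT, Real.sinh_neg, Real.sinh_neg] at I2
  simp only [mul_neg, sub_neg_eq_add] at I2
  have hmT : m * Real.sinh (P T) = -σ := by rw [hsinhT, hσ]; ring
  have L1 : Real.log (1 - m*Real.sinh (P T)) = Real.log (1+σ) := by
    rw [hmT]; ring_nf
  have L2 : Real.log (1 + m*Real.sinh (P T)) = Real.log (1-σ) := by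
    rw [hmT]; ring_nf
  have hcont2 : Continuous fun s => 2*(m*Real.cosh (P s)) := by fun_prop
  have hQint : (∫ s in (0:ℝ)..T, 2*(m*Real.cosh (Q s))) = ∫ s in T..(2*T), 2*(m*Real.cosh (P s)) := by
    have e1' : ∀ s ∈ uIcc (0:ℝ) T, 2*(m*Real.cosh (Q s)) = (fun u => 2*(m*Real.cosh (P u))) (s - T) := by
      intro s _
      simp [hQ, Real.cosh_neg]
    rw [intervalIntegral.integral_congr e1']
    rw [intervalIntegral.integral_comp_sub_right (fun u => 2*(m*Real.cosh (P u))) T]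
    have e2' : ∀ s ∈ uIcc (0-T) (T-T), (fun u => 2*(m*Real.cosh (P u))) s
        = (fun u => 2*(m*Real.cosh (P u))) (s + 2*T) := by
      intro s _
      simp only
      rw [hPper s]
    rw [intervalIntegral.integral_congr e2']
    rw [intervalIntegral.integral_comp_add_right (fun u => 2*(m*Real.cosh (P u))) (2*T)]
    rw [show (0:ℝ)-T+2*T = T by ring, show T-T+2*T = 2*T by ring]
  have hItot : (∫ s in (0:ℝ)..(2*T), 2*(m*Real.cosh (P s)))
      = 2*Real.log ((m^2*b^4+2*b^2+m^2 + m*(b^2-1)*Real.sqrt C) / (2*(1+m^2)*b^2)) := by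
    have hadj := intervalIntegral.integral_add_adjacent_intervals
      (hcont2.intervalIntegrable (μ := MeasureTheory.volume) 0 T)
      (hcont2.intervalIntegrable (μ := MeasureTheory.volume) T (2*T))
    rw [← hadj, I1, ← hQint, I2, hlog, L1, L2]
    ring
  have hsplit : DeltaP ε m T P = (1/(2*T)) * ((∫ s in (0:ℝ)..(2*T), 2*(m*Real.cosh (P s))) - (2*T)*(2*m + 2*ε)) := by
    rw [DeltaP]
    congr 1
    have e3 : ∀ s ∈ uIcc (0:ℝ) (2*T), 2*(m*Real.cosh (P s) - m - ε) = (fun u => 2*(m*Real.cosh (P u)) - (2*m + 2*ε)) s := by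
      intro s _
      simp only
      ring
    rw [intervalIntegral.integral_congr e3]
    rw [intervalIntegral.integral_sub (hcont2.intervalIntegrable 0 (2*T)) intervalIntegrable_const]
    rw [intervalIntegral.integral_const]
    simp only [smul_eq_mul, sub_zero]
  rw [hsplit, hItot]
  field_simp
end

section
/- Let 0 < ε ≤ 1, m > 0, T > 0. For h ∈ {−1, +1}, let M^h_{ε,m} be the 2×2 real matrix with rows (h − m − ε, m) and (m, −h − m − ε), and let M(ε,m,T) = exp(T·M^{−1}_{ε,m})·exp(T·M^{+1}_{ε,m}). Set A = √(1+m²), b = e^{TA}, and C₁ = b⁸m⁴ + 4b⁶m² − 2b⁴m⁴ − 8b⁴m² + 4b²m² + m⁴. Then the largest eigenvalue of M(ε,m,T) equals λ₁ = (e^{−2(m+ε)T}/(2A²b²))·(m²b⁴ + 2b² + m² + √C₁). -/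
open Real Filter Set

lemma exp_aux (m T a A b h : ℝ) (hm : m ≠ 0) (hA0 : A ≠ 0) (hA2 : A ^ 2 = 1 + m ^ 2)
    (hh : h ^ 2 = 1) (hb : b = Real.exp (T * A)) :
    NormedSpace.exp (T • (!![a + h, m; m, a - h] : Matrix (Fin 2) (Fin 2) ℝ)) =
      (Real.exp (T * a) / (2 * m * A * b)) •
        !![m * ((A + h) * b ^ 2 + (A - h)), m ^ 2 * (b ^ 2 - 1);
           m ^ 2 * (b ^ 2 - 1), m * ((A - h) * b ^ 2 + (A + h))] := by
  have hb0 : b ≠ 0 := by rw [hb]; exact (Real.exp_pos _).ne'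
  set U : Matrix (Fin 2) (Fin 2) ℝ := !![m, m; A - h, -A - h] with hU
  set V : Matrix (Fin 2) (Fin 2) ℝ := (2 * m * A)⁻¹ • !![A + h, m; A - h, -m] with hV
  have hUV : U * V = 1 := by
    ext i j
    fin_cases i <;> fin_cases j <;>
      simp [hU, hV, Matrix.mul_apply, Fin.sum_univ_two, Matrix.one_apply] <;>
      field_simp <;> ring
  have hVU : V * U = 1 := mul_eq_one_comm.mp hUV
  have hUunit : IsUnit U := ⟨⟨U, V, hUV, hVU⟩, rfl⟩
  have hUinv : U⁻¹ = V := Matrix.inv_eq_right_inv hUV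
  set D : Matrix (Fin 2) (Fin 2) ℝ := Matrix.diagonal ![T * (a + A), T * (a - A)] with hD
  have hMD : (T • (!![a + h, m; m, a - h] : Matrix (Fin 2) (Fin 2) ℝ)) * U = U * D := by
    ext i j
    fin_cases i <;> fin_cases j <;>
      simp [hU, hD, Matrix.mul_apply, Fin.sum_univ_two, Matrix.diagonal] <;>
      first
        | ring1
        | linear_combination T * hh - T * hA2
        | linear_combination T * hA2 - T * hh
  have hM : T • (!![a + h, m; m, a - h] : Matrix (Fin 2) (Fin 2) ℝ) = U * D * U⁻¹ := by
    rw [hUinv, ← hMD, Matrix.mul_assoc, hUV, Matrix.mul_one]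
  have hexp : NormedSpace.exp D =
      !![Real.exp (T * (a + A)), 0; 0, Real.exp (T * (a - A))] := by
    rw [hD, Matrix.exp_diagonal]
    ext i j
    fin_cases i <;> fin_cases j <;>
      simp [Matrix.diagonal_apply, Pi.exp_def, ← Real.exp_eq_exp_ℝ]
  have h1 : Real.exp (T * (a + A)) = Real.exp (T * a) * b := by
    rw [hb, ← Real.exp_add]; ring_nf
  have h2 : Real.exp (T * (a - A)) * b = Real.exp (T * a) := by
    rw [hb, ← Real.exp_add]; ring_nf
  rw [hM, Matrix.exp_conj U D hUunit, hexp, hUinv]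
  ext i j
  fin_cases i <;> fin_cases j <;>
    simp [hU, hV, Matrix.mul_apply, Fin.sum_univ_two] <;> field_simp
  · linear_combination (A + h) * b * h1 + (A - h) * h2
  · linear_combination b * h1 - h2
  · linear_combination (A ^ 2 - h ^ 2) * b * h1 - (A ^ 2 - h ^ 2) * h2 +
      Real.exp (T * a) * (b ^ 2 - 1) * (hA2 - hh)
  · linear_combination (A - h) * b * h1 + (A + h) * h2


/-- The matrix `M^h_{ε,m}` of the linear system `Σ^h(ε,m)`. -/
noncomputable def Mswitch (ε m h : ℝ) : Matrix (Fin 2) (Fin 2) ℝ :=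
  !![h - m - ε, m; m, -h - m - ε]

/-- The period (monodromy) map `M(ε,m,T) = exp(T M⁻¹) exp(T M⁺¹)` of `Σ(ε,m,T)`. -/
noncomputable def monodromy (ε m T : ℝ) : Matrix (Fin 2) (Fin 2) ℝ :=
  NormedSpace.exp (T • Mswitch ε m (-1)) * NormedSpace.exp (T • Mswitch ε m 1)

theorem statement14 (ε m T : ℝ) (hε : 0 < ε) (hε1 : ε ≤ 1) (hm : 0 < m) (hT : 0 < T)
    (A b C₁ : ℝ) (hA : A = Real.sqrt (1 + m ^ 2)) (hb : b = Real.exp (T * A))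
    (hC₁ : C₁ = b ^ 8 * m ^ 4 + 4 * b ^ 6 * m ^ 2 - 2 * b ^ 4 * m ^ 4 -
      8 * b ^ 4 * m ^ 2 + 4 * b ^ 2 * m ^ 2 + m ^ 4) :
    IsGreatest (spectrum ℝ (monodromy ε m T))
      (Real.exp (-2 * (m + ε) * T) / (2 * A ^ 2 * b ^ 2) *
        (m ^ 2 * b ^ 4 + 2 * b ^ 2 + m ^ 2 + Real.sqrt C₁)) := by
  have hA2 : A ^ 2 = 1 + m ^ 2 := by rw [hA]; exact Real.sq_sqrt (by positivity)
  have hApos : 0 < A := by rw [hA]; exact Real.sqrt_pos.mpr (by positivity)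
  have hA0 : A ≠ 0 := hApos.ne'
  have hbpos : 0 < b := hb ▸ Real.exp_pos _
  have hb0 : b ≠ 0 := hbpos.ne'
  have hm0 : m ≠ 0 := hm.ne'
  set a : ℝ := -(m + ε) with ha
  have hMs : ∀ h : ℝ, Mswitch ε m h = !![a + h, m; m, a - h] := by
    intro h
    ext i j
    fin_cases i <;> fin_cases j <;> simp [Mswitch, ha] <;> ring
  set e0 : ℝ := Real.exp (T * a) with he0
  set E : ℝ := Real.exp (-2 * (m + ε) * T) with hEdef
  have hE : e0 * e0 = E := by rw [he0, hEdef, ← Real.exp_add, ha]; ring_nf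
  have hE' : Real.exp (T * a) * Real.exp (T * a) = E := hE
  set K : ℝ := E / (2 * A ^ 2 * b ^ 2) with hK
  set p₀ : ℝ := m ^ 2 * b ^ 4 + 2 * b ^ 2 + m ^ 2 with hp₀
  set q₀ : ℝ := m * (b ^ 2 - 1) * ((A - 1) * b ^ 2 + A + 1) with hq₀
  set r₀ : ℝ := m * (b ^ 2 - 1) * ((A + 1) * b ^ 2 + A - 1) with hr₀
  have key : monodromy ε m T = !![K * p₀, K * q₀; K * r₀, K * p₀] := by
    rw [monodromy, hMs, hMs,
      exp_aux m T a A b (-1) hm0 hA0 hA2 (by norm_num) hb,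
      exp_aux m T a A b 1 hm0 hA0 hA2 (by norm_num) hb]
    ext i j
    fin_cases i <;> fin_cases j <;>
      simp [Matrix.mul_apply, Fin.sum_univ_two, hK, hp₀, hq₀, hr₀] <;> field_simp
    · linear_combination 2 * (b ^ 2 * (m ^ 2 * b ^ 2 + 2) + m ^ 2) * hE' +
        Real.exp (T * a) ^ 2 * (b ^ 2 + 1) ^ 2 * hA2
    · linear_combination 2 * (b ^ 2 - 1) * (b ^ 2 * (A - 1) + A + 1) * hE'
    · linear_combination 2 * (b ^ 2 - 1) * (b ^ 2 * (A + 1) + A - 1) * hE'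
    · linear_combination 2 * (b ^ 2 * (m ^ 2 * b ^ 2 + 2) + m ^ 2) * hE' +
        Real.exp (T * a) ^ 2 * (b ^ 2 + 1) ^ 2 * hA2
  have hC₁fact : C₁ = m ^ 2 * (b ^ 2 - 1) ^ 2 * (m ^ 2 * (b ^ 2 + 1) ^ 2 + 4 * b ^ 2) := by
    rw [hC₁]; ring
  have hC₁0 : 0 ≤ C₁ := by rw [hC₁fact]; positivity
  have hqr : q₀ * r₀ = C₁ := by
    rw [hq₀, hr₀, hC₁]
    linear_combination (m ^ 2 * (b ^ 2 - 1) ^ 2 * (b ^ 2 + 1) ^ 2) * hA2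
  have hK0 : 0 ≤ K := by
    rw [hK, hEdef]; positivity
  have hs : K ^ 2 * C₁ = (K * Real.sqrt C₁) ^ 2 := by
    rw [mul_pow, Real.sq_sqrt hC₁0]
  have hmem : ∀ x : ℝ, x ∈ spectrum ℝ (monodromy ε m T) ↔ (x - K * p₀) ^ 2 = K ^ 2 * C₁ := by
    intro x
    rw [spectrum.mem_iff, Matrix.isUnit_iff_isUnit_det, isUnit_iff_ne_zero, not_ne_iff, key]
    have hmat : (algebraMap ℝ (Matrix (Fin 2) (Fin 2) ℝ)) x - !![K * p₀, K * q₀; K * r₀, K * p₀]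
        = !![x - K * p₀, -(K * q₀); -(K * r₀), x - K * p₀] := by
      ext i j
      fin_cases i <;> fin_cases j <;>
        simp [Matrix.algebraMap_matrix_apply]
    rw [hmat, Matrix.det_fin_two_of]
    constructor
    · intro hdet
      linear_combination hdet + K ^ 2 * hqr
    · intro hdet
      linear_combination hdet - K ^ 2 * hqr
  have htarget : Real.exp (-2 * (m + ε) * T) / (2 * A ^ 2 * b ^ 2) *
      (m ^ 2 * b ^ 4 + 2 * b ^ 2 + m ^ 2 + Real.sqrt C₁) = K * p₀ + K * Real.sqrt C₁ := by
    rw [hK, hp₀, hEdef]; ring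
  constructor
  · rw [htarget, hmem]
    rw [show K * p₀ + K * Real.sqrt C₁ - K * p₀ = K * Real.sqrt C₁ by ring, hs]
  · intro x hx
    rw [hmem] at hx
    rw [htarget]
    have hy0 : 0 ≤ K * Real.sqrt C₁ := mul_nonneg hK0 (Real.sqrt_nonneg _)
    have hfac : (x - K * p₀ - K * Real.sqrt C₁) * (x - K * p₀ + K * Real.sqrt C₁) = 0 := by
      linear_combination hx + hs
    rcases mul_eq_zero.mp hfac with h' | h'
    · linarith
    · linarith
end

section
/- Let 0 < ε ≤ 1, α > 0, m > 0, T > 0. Suppose the linear system Σ(ε,m,T) is stable, i.e. every solution of Σ(ε,m,T) with positive initial data tends to (0,0) as t → ∞. Then every solution (x₁, x₂) of the density-dependent system D(ε,α,m,T) with x₁(0) ≥ 0 and x₂(0) ≥ 0 satisfies x₁(t) → 0 and x₂(t) → 0 as t → ∞. -/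
open Real Filter Set

/-- A solution of the planar switched linear system `Σ(ε,m,T)`. -/
def IsSolSigma (ε m T : ℝ) (x₁ x₂ : ℝ → ℝ) : Prop :=
  Continuous x₁ ∧ Continuous x₂ ∧ ∀ t : ℝ, (∀ n : ℤ, t ≠ n * T) →
    HasDerivAt x₁ ((squareWave T t - ε) * x₁ t + m * (x₂ t - x₁ t)) t ∧
    HasDerivAt x₂ ((-squareWave T t - ε) * x₂ t + m * (x₁ t - x₂ t)) t

/-- A solution of the density-dependent switched system `D(ε,α,m,T)`. -/
def IsSolD (ε α m T : ℝ) (x₁ x₂ : ℝ → ℝ) : Prop :=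
  Continuous x₁ ∧ Continuous x₂ ∧ ∀ t : ℝ, (∀ n : ℤ, t ≠ n * T) →
    HasDerivAt x₁ ((squareWave T t - ε) * x₁ t - α * (x₁ t) ^ 2 + m * (x₂ t - x₁ t)) t ∧
    HasDerivAt x₂ ((-squareWave T t - ε) * x₂ t - α * (x₂ t) ^ 2 + m * (x₁ t - x₂ t)) t

section AuxiliaryForStatement16
open NormedSpace

noncomputable section Aux

abbrev E2 := ℝ × ℝ

noncomputable def cmap (p q r s : ℝ) : E2 →L[ℝ] E2 :=
  (p • ContinuousLinearMap.fst ℝ ℝ ℝ + q • ContinuousLinearMap.snd ℝ ℝ ℝ).prod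
  (r • ContinuousLinearMap.fst ℝ ℝ ℝ + s • ContinuousLinearMap.snd ℝ ℝ ℝ)

lemma cmap_apply (p q r s : ℝ) (w : E2) :
    cmap p q r s w = (p * w.1 + q * w.2, r * w.1 + s * w.2) := by
  simp [cmap, smul_eq_mul]

noncomputable def eFlow (A : E2 →L[ℝ] E2) (t : ℝ) : E2 →L[ℝ] E2 := exp (t • A)

lemma eFlow_deriv (A : E2 →L[ℝ] E2) (w : E2) (c t : ℝ) :
    HasDerivAt (fun t => eFlow A (t - c) w) (A (eFlow A (t - c) w)) t := by
  have h := hasDerivAt_exp_smul_const' (𝕂 := ℝ) A (t - c)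
  have hg : HasDerivAt (fun t : ℝ => t - c) 1 t := by
    simpa using (hasDerivAt_id t).sub_const c
  have h2 : HasDerivAt (fun t : ℝ => exp ((t - c) • A)) (A * exp ((t - c) • A)) t := by
    simpa [Function.comp_def] using h.scomp t hg
  have h3 := h2.clm_apply (hasDerivAt_const t w)
  simpa [eFlow] using h3

lemma eFlow_zero (A : E2 →L[ℝ] E2) (w : E2) : eFlow A 0 w = w := by
  simp [eFlow, exp_zero]

lemma eFlow_cont (A : E2 →L[ℝ] E2) (w : E2) (c : ℝ) :
    Continuous (fun t => eFlow A (t - c) w) :=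
  continuous_iff_continuousAt.2 fun t => (eFlow_deriv A w c t).continuousAt

variable (ε m T : ℝ)

noncomputable def AS (σ : ℝ) : E2 →L[ℝ] E2 := cmap (σ - ε - m) m m (-σ - ε - m)

noncomputable instance E2QNormedAlgebra : NormedAlgebra ℚ (E2 →L[ℝ] E2) :=
  NormedAlgebra.restrictScalars ℚ ℝ (E2 →L[ℝ] E2)

noncomputable def MuU : (E2 →L[ℝ] E2)ˣ :=
  (isUnit_exp (T • AS ε m (-1))).unit * (isUnit_exp (T • AS ε m 1)).unit

noncomputable def qSeq (v : E2) (n : ℤ) : E2 :=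
  ((MuU ε m T ^ n : (E2 →L[ℝ] E2)ˣ) : E2 →L[ℝ] E2) v

lemma qSeq_succ (v : E2) (n : ℤ) :
    qSeq ε m T v (n + 1) = eFlow (AS ε m (-1)) T (eFlow (AS ε m 1) T (qSeq ε m T v n)) := by
  have h : MuU ε m T ^ (n + 1) = MuU ε m T * MuU ε m T ^ n := by
    rw [add_comm, zpow_one_add]
  simp only [qSeq, h, Units.val_mul, ContinuousLinearMap.mul_apply]
  have h1 : ((MuU ε m T : (E2 →L[ℝ] E2)ˣ) : E2 →L[ℝ] E2)
      = exp (T • AS ε m (-1)) * exp (T • AS ε m 1) := by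
    simp [MuU]
  rw [h1]
  simp [eFlow, ContinuousLinearMap.mul_apply]

def sgn (k : ℤ) : ℝ := if Even k then 1 else -1

noncomputable def rSeq (v : E2) (k : ℤ) : E2 :=
  if Even k then qSeq ε m T v (k / 2)
  else eFlow (AS ε m 1) T (qSeq ε m T v ((k - 1) / 2))

noncomputable def gPiece (v : E2) (k : ℤ) (t : ℝ) : E2 :=
  eFlow (AS ε m (sgn k)) (t - k * T) (rSeq ε m T v k)

lemma gPiece_match (v : E2) (k : ℤ) :
    gPiece ε m T v k ((k + 1) * T) = gPiece ε m T v (k + 1) ((k + 1) * T) := by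
  have hT' : ((k : ℝ) + 1) * T - (k : ℝ) * T = T := by ring
  rcases Int.even_or_odd k with ⟨n, hn⟩ | ⟨n, hn⟩
  · have he : Even k := ⟨n, hn⟩
    have hno : ¬ Even (k + 1) := by
      simp [Int.even_add_one, he]
    have hs : sgn k = 1 := by simp [sgn, he]
    have h2 : (k + 1 - 1) / 2 = k / 2 := by omega
    have hs1 : sgn (k + 1) = -1 := by simp [sgn, hno]
    simp only [gPiece, rSeq, hs, hs1, if_neg hno, if_pos he, h2]
    push_cast
    rw [hT', show ((k : ℝ) + 1) * T - ((k : ℝ) + 1) * T = 0 by ring, eFlow_zero]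
  · have hno : ¬ Even k := by
      intro h; rw [Int.even_iff] at h; omega
    have he : Even (k + 1) := by
      rw [Int.even_add_one]; exact hno
    have hs : sgn k = -1 := by simp [sgn, hno]
    have h2 : (k + 1) / 2 = (k - 1) / 2 + 1 := by omega
    have hs1 : sgn (k + 1) = 1 := by simp [sgn, he]
    simp only [gPiece, rSeq, hs, hs1, if_neg hno, if_pos he, h2]
    push_cast
    rw [hT', show ((k : ℝ) + 1) * T - ((k : ℝ) + 1) * T = 0 by ring, eFlow_zero, qSeq_succ]

end Aux

noncomputable section Aux2

noncomputable def sol (ε m T : ℝ) (v : E2) (t : ℝ) : E2 := gPiece ε m T v ⌊t / T⌋ t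

variable {ε m T : ℝ}

lemma floor_eq_k (hT : 0 < T) {k : ℤ} {t : ℝ} (h1 : (k : ℝ) * T ≤ t) (h2 : t < ((k : ℝ) + 1) * T) :
    ⌊t / T⌋ = k := by
  rw [Int.floor_eq_iff]
  constructor
  · rw [le_div_iff₀ hT]; linarith
  · rw [div_lt_iff₀ hT]; push_cast; linarith

lemma sol_eq_gPiece (hT : 0 < T) (v : E2) {k : ℤ} {t : ℝ}
    (h1 : (k : ℝ) * T ≤ t) (h2 : t ≤ ((k : ℝ) + 1) * T) :
    sol ε m T v t = gPiece ε m T v k t := by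
  rcases lt_or_eq_of_le h2 with h2' | h2'
  · rw [sol, floor_eq_k hT h1 h2']
  · have hf : ⌊t / T⌋ = k + 1 := by
      apply floor_eq_k hT
      · push_cast; linarith
      · push_cast; nlinarith
    subst h2'
    rw [sol, hf]
    have hmm := (gPiece_match ε m T v k).symm
    push_cast at hmm ⊢
    exact hmm

lemma gPiece_cont (v : E2) (k : ℤ) : Continuous (gPiece ε m T v k) :=
  eFlow_cont _ _ _

lemma sol_cont (hT : 0 < T) (v : E2) : Continuous (sol ε m T v) := by
  rw [continuous_iff_continuousAt]
  intro t
  by_cases hex : ∃ n : ℤ, t = n * T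
  · obtain ⟨n, rfl⟩ := hex
    rw [continuousAt_iff_continuous_left_right]
    constructor
    · -- left: gPiece (n-1)
      apply ((gPiece_cont v (n - 1)).continuousAt.continuousWithinAt).congr_of_eventuallyEq
      · filter_upwards [Icc_mem_nhdsLE
          (show ((n : ℝ) - 1) * T < (n : ℝ) * T by nlinarith)] with x hx
        apply sol_eq_gPiece hT v (by push_cast; exact hx.1)
        push_cast; linarith [hx.2]
      · apply sol_eq_gPiece hT v (by push_cast; nlinarith)
        push_cast; linarith
    · -- right: gPiece n
      apply ((gPiece_cont v n).continuousAt.continuousWithinAt).congr_of_eventuallyEq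
      · filter_upwards [Ico_mem_nhdsGE
          (show (n : ℝ) * T < ((n : ℝ) + 1) * T by nlinarith)] with x hx
        exact sol_eq_gPiece hT v hx.1 (le_of_lt hx.2)
      · exact sol_eq_gPiece hT v le_rfl (by nlinarith)
  · push_neg at hex
    set k := ⌊t / T⌋ with hk
    have h1 : (k : ℝ) * T ≤ t := by
      rw [← le_div_iff₀ hT]; exact Int.floor_le _
    have h1' : (k : ℝ) * T < t := h1.lt_of_ne (fun h => hex k h.symm)
    have h2 : t < ((k : ℝ) + 1) * T := by
      rw [← div_lt_iff₀ hT]; push_cast; exact Int.lt_floor_add_one _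
    apply ((gPiece_cont v k).continuousAt).congr
    filter_upwards [Ioo_mem_nhds h1' h2] with x hx
    exact (sol_eq_gPiece hT v hx.1.le hx.2.le).symm

lemma squareWave_eq_sgn (hT : 0 < T) {k : ℤ} {t : ℝ} (h1 : (k : ℝ) * T < t) (h2 : t < ((k : ℝ) + 1) * T) :
    squareWave T t = sgn k := by
  have h2T : (0 : ℝ) < 2 * T := by linarith
  rcases Int.even_or_odd k with ⟨n, hn⟩ | ⟨n, hn⟩
  · have hcast : (k : ℝ) = 2 * n := by rw [hn]; push_cast; ring
    have hl : (n : ℝ) < t / (2 * T) := by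
      rw [lt_div_iff₀ h2T]; nlinarith
    have hr : t / (2 * T) < (n : ℝ) + 1 / 2 := by
      rw [div_lt_iff₀ h2T]; nlinarith
    have hf : ⌊t / (2 * T)⌋ = n := by
      rw [Int.floor_eq_iff]
      exact ⟨hl.le, by linarith⟩
    have : Int.fract (t / (2 * T)) < 1 / 2 := by
      rw [Int.fract, hf]; linarith
    rw [squareWave, if_pos this, sgn, if_pos ⟨n, hn⟩]
  · have hcast : (k : ℝ) = 2 * n + 1 := by rw [hn]; push_cast; ring
    have hl : (n : ℝ) + 1 / 2 < t / (2 * T) := by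
      rw [lt_div_iff₀ h2T]; nlinarith
    have hr : t / (2 * T) < (n : ℝ) + 1 := by
      rw [div_lt_iff₀ h2T]; nlinarith
    have hf : ⌊t / (2 * T)⌋ = n := by
      rw [Int.floor_eq_iff]
      constructor
      · linarith
      · push_cast; linarith
    have : ¬ (Int.fract (t / (2 * T)) < 1 / 2) := by
      rw [Int.fract, hf]; push_neg; linarith
    have hodd : ¬ Even k := by
      rw [Int.even_iff]; omega
    rw [squareWave, if_neg this, sgn, if_neg hodd]

lemma sol_hasDeriv (hT : 0 < T) (v : E2) {t : ℝ} (ht : ∀ n : ℤ, t ≠ n * T) :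
    HasDerivAt (sol ε m T v) (AS ε m (squareWave T t) (sol ε m T v t)) t := by
  set k := ⌊t / T⌋ with hk
  have h1 : (k : ℝ) * T ≤ t := by
    rw [← le_div_iff₀ hT]; exact Int.floor_le _
  have h1' : (k : ℝ) * T < t := h1.lt_of_ne (fun h => ht k h.symm)
  have h2 : t < ((k : ℝ) + 1) * T := by
    rw [← div_lt_iff₀ hT]; push_cast; exact Int.lt_floor_add_one _
  have hsw : squareWave T t = sgn k := squareWave_eq_sgn hT h1' h2
  have hd : HasDerivAt (gPiece ε m T v k) (AS ε m (sgn k) (gPiece ε m T v k t)) t :=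
    eFlow_deriv _ _ _ _
  have heq : sol ε m T v =ᶠ[nhds t] gPiece ε m T v k := by
    filter_upwards [Ioo_mem_nhds h1' h2] with x hx
    exact sol_eq_gPiece hT v hx.1.le hx.2.le
  rw [hsw, sol_eq_gPiece hT v h1 h2.le]
  exact hd.congr_of_eventuallyEq heq

lemma sol_zero (hT : 0 < T) (v : E2) : sol ε m T v 0 = v := by
  have h := sol_eq_gPiece (ε := ε) (m := m) hT v (k := 0) (t := 0)
    (by norm_num) (by norm_num; linarith)
  rw [h]
  simp only [gPiece, Int.cast_zero, zero_mul, sub_zero]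
  rw [eFlow_zero]
  simp [rSeq, qSeq]

end Aux2

lemma hasDerivAt_fst {f : ℝ → E2} {d : E2} {t : ℝ} (h : HasDerivAt f d t) :
    HasDerivAt (fun t => (f t).1) d.1 t := by
  have h2 := (h.hasFDerivAt.fst).hasDerivAt
  simpa using h2

lemma hasDerivAt_snd {f : ℝ → E2} {d : E2} {t : ℝ} (h : HasDerivAt f d t) :
    HasDerivAt (fun t => (f t).2) d.2 t := by
  have h2 := (h.hasFDerivAt.snd).hasDerivAt
  simpa using h2

lemma sigma_exists (ε m T : ℝ) (hT : 0 < T) (a b : ℝ) :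
    ∃ y₁ y₂ : ℝ → ℝ, IsSolSigma ε m T y₁ y₂ ∧ y₁ 0 = a ∧ y₂ 0 = b := by
  refine ⟨fun t => (sol ε m T (a, b) t).1, fun t => (sol ε m T (a, b) t).2,
    ⟨(continuous_fst.comp (sol_cont hT _)), (continuous_snd.comp (sol_cont hT _)), ?_⟩,
    by show (sol ε m T (a, b) 0).1 = a; rw [sol_zero hT],
    by show (sol ε m T (a, b) 0).2 = b; rw [sol_zero hT]⟩
  intro t ht
  have hd := sol_hasDeriv (ε := ε) (m := m) hT (a, b) ht
  have hA : AS ε m (squareWave T t) (sol ε m T (a, b) t) =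
      ((squareWave T t - ε) * (sol ε m T (a, b) t).1
        + m * ((sol ε m T (a, b) t).2 - (sol ε m T (a, b) t).1),
       (-squareWave T t - ε) * (sol ε m T (a, b) t).2
        + m * ((sol ε m T (a, b) t).1 - (sol ε m T (a, b) t).2)) := by
    rw [AS, cmap_apply]
    exact Prod.ext (by dsimp only; ring) (by dsimp only; ring)
  rw [hA] at hd
  exact ⟨by simpa using hasDerivAt_fst hd, by simpa using hasDerivAt_snd hd⟩

lemma mono_piece {f f' : ℝ → ℝ} {a b : ℝ} (hab : a ≤ b) (hc : Continuous f)
    (hd : ∀ t, a < t → t < b → HasDerivAt f (f' t) t ∧ 0 ≤ f' t) :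
    f a ≤ f b := by
  rcases eq_or_lt_of_le hab with rfl | hab'
  · exact le_rfl
  have hm : MonotoneOn f (Icc a b) := by
    apply monotoneOn_of_deriv_nonneg (convex_Icc a b) hc.continuousOn
    · intro t ht
      rw [interior_Icc] at ht
      exact (hd t ht.1 ht.2).1.differentiableAt.differentiableWithinAt
    · intro t ht
      rw [interior_Icc] at ht
      rw [(hd t ht.1 ht.2).1.deriv]
      exact (hd t ht.1 ht.2).2
  exact hm (left_mem_Icc.2 hab) (right_mem_Icc.2 hab) hab

lemma mono_T {T : ℝ} (hT : 0 < T) {f f' : ℝ → ℝ} {a b : ℝ} (hab : a ≤ b)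
    (hc : Continuous f)
    (hd : ∀ t, a < t → t < b → (∀ n : ℤ, t ≠ n * T) → HasDerivAt f (f' t) t ∧ 0 ≤ f' t) :
    f a ≤ f b := by
  have step : ∀ c d : ℝ, a ≤ c → d ≤ b → c ≤ d →
      (∀ n : ℤ, ¬(c < (n : ℝ) * T ∧ (n : ℝ) * T < d)) → f c ≤ f d := by
    intro c d hac hdb hcd hno
    apply mono_piece hcd hc
    intro t ht1 ht2
    refine hd t (lt_of_le_of_lt hac ht1) (lt_of_lt_of_le ht2 hdb) ?_
    intro n hn
    exact hno n ⟨hn ▸ ht1, hn ▸ ht2⟩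
  set i := ⌈a / T⌉ with hi
  set j := ⌊b / T⌋ with hj
  have hiT : a ≤ (i : ℝ) * T := by
    rw [← div_le_iff₀ hT]
    exact Int.le_ceil _
  have hjT : (j : ℝ) * T ≤ b := by
    rw [← le_div_iff₀ hT]
    exact Int.floor_le _
  have hmul : ∀ p q : ℤ, p < q → (p : ℝ) * T < (q : ℝ) * T := by
    intro p q hpq
    have : (p : ℝ) < q := by exact_mod_cast hpq
    nlinarith
  have hmul' : ∀ p q : ℤ, (p : ℝ) * T < (q : ℝ) * T → p < q := by
    intro p q hpq
    by_contra hc'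
    push_neg at hc'
    have : (q : ℝ) ≤ p := by exact_mod_cast hc'
    nlinarith
  by_cases hij : j < i
  · apply step a b le_rfl le_rfl hab
    rintro n ⟨h1, h2⟩
    have hn1 : i ≤ n := Int.ceil_le.2 (by rw [div_le_iff₀ hT]; linarith)
    have hn2 : n ≤ j := Int.le_floor.2 (by rw [le_div_iff₀ hT]; linarith)
    omega
  · push_neg at hij
    have hijR : (i : ℝ) * T ≤ (j : ℝ) * T := by
      have h : (i:ℝ) ≤ (j:ℝ) := by exact_mod_cast hij
      nlinarith
    have h1 : f a ≤ f ((i : ℝ) * T) := by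
      apply step a ((i : ℝ) * T) le_rfl (le_trans hijR hjT) hiT
      rintro n ⟨hn1, hn2⟩
      have : i ≤ n := Int.ceil_le.2 (by rw [div_le_iff₀ hT]; linarith)
      have : n < i := hmul' n i hn2
      omega
    have h3 : f ((j : ℝ) * T) ≤ f b := by
      apply step ((j : ℝ) * T) b (le_trans hiT hijR) le_rfl hjT
      rintro n ⟨hn1, hn2⟩
      have : n ≤ j := Int.le_floor.2 (by rw [le_div_iff₀ hT]; linarith)
      have : j < n := hmul' j n hn1
      omega
    have h2 : ∀ k : ℤ, i ≤ k → k ≤ j → f ((i : ℝ) * T) ≤ f ((k : ℝ) * T) := by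
      refine Int.leInduction (motive := fun k _ => k ≤ j → f ((i : ℝ) * T) ≤ f ((k : ℝ) * T)) ?_ ?_
      · intro _; exact le_rfl
      · intro k hik' IH hkj
        have hIH := IH (by omega)
        have hstep : f ((k : ℝ) * T) ≤ f (((k + 1 : ℤ) : ℝ) * T) := by
          apply step ((k : ℝ) * T) (((k + 1 : ℤ) : ℝ) * T)
            (le_trans hiT (by nlinarith [show (i:ℝ) ≤ (k:ℝ) from by exact_mod_cast hik']))
            (le_trans (by push_cast; nlinarith [show (k:ℝ) + 1 ≤ (j:ℝ) from by exact_mod_cast hkj]) hjT)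
            (hmul k (k + 1) (by omega)).le
          rintro n ⟨hn1, hn2⟩
          have : k < n := hmul' k n hn1
          have : n < k + 1 := hmul' n (k + 1) hn2
          omega
        have h5 : f ((i : ℝ) * T) ≤ f (((k + 1 : ℤ) : ℝ) * T) := le_trans hIH hstep
        exact_mod_cast h5
    calc f a ≤ f ((i : ℝ) * T) := h1
      _ ≤ f ((j : ℝ) * T) := h2 j hij le_rfl
      _ ≤ f b := h3

lemma pos_pair {T K b : ℝ} (hT : 0 < T) (hb : 0 ≤ b) {w₁ w₂ d₁ d₂ : ℝ → ℝ}
    (hc1 : Continuous w₁) (hc2 : Continuous w₂)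
    (h01 : 0 < w₁ 0) (h02 : 0 < w₂ 0)
    (hd : ∀ t, 0 ≤ t → t ≤ b → 0 ≤ w₁ t → 0 ≤ w₂ t → (∀ n : ℤ, t ≠ n * T) →
      HasDerivAt w₁ (d₁ t) t ∧ HasDerivAt w₂ (d₂ t) t ∧
      -(K * w₁ t) ≤ d₁ t ∧ -(K * w₂ t) ≤ d₂ t) :
    ∀ t, 0 ≤ t → t ≤ b → 0 < w₁ t ∧ 0 < w₂ t := by
  by_contra hcon
  push_neg at hcon
  obtain ⟨t₁, ht₁0, ht₁b, ht₁⟩ := hcon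
  set S := {t : ℝ | t ∈ Icc 0 b ∧ (w₁ t ≤ 0 ∨ w₂ t ≤ 0)} with hS
  have hSne : S.Nonempty := by
    refine ⟨t₁, ⟨ht₁0, ht₁b⟩, ?_⟩
    by_cases h : w₁ t₁ ≤ 0
    · exact Or.inl h
    · exact Or.inr (ht₁ (lt_of_not_ge h))
  have hSclosed : IsClosed S := by
    have : S = Icc 0 b ∩ (w₁ ⁻¹' Iic 0 ∪ w₂ ⁻¹' Iic 0) := by
      ext t
      simp [hS, Set.mem_inter_iff, Set.mem_union, Set.mem_preimage, Set.mem_Iic]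
    rw [this]
    exact isClosed_Icc.inter ((isClosed_Iic.preimage hc1).union (isClosed_Iic.preimage hc2))
  have hbdd : BddBelow S := ⟨0, fun t ht => ht.1.1⟩
  set t0 := sInf S with ht0def
  have ht0S : t0 ∈ S := hSclosed.csInf_mem hSne hbdd
  have ht00 : 0 ≤ t0 := ht0S.1.1
  have ht0b : t0 ≤ b := ht0S.1.2
  have hpos : ∀ t, 0 ≤ t → t < t0 → 0 < w₁ t ∧ 0 < w₂ t := by
    intro t ht0 htlt
    by_contra hq
    push_neg at hq
    have htS : t ∈ S := by
      refine ⟨⟨ht0, le_trans htlt.le ht0b⟩, ?_⟩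
      by_cases h : w₁ t ≤ 0
      · exact Or.inl h
      · exact Or.inr (hq (lt_of_not_ge h))
    exact absurd (csInf_le hbdd htS) (not_le.2 htlt)
  have ht0pos : 0 < t0 := by
    rcases eq_or_lt_of_le ht00 with h | h
    · exfalso
      rcases ht0S.2 with h1 | h1 <;> rw [← h] at h1 <;> linarith
    · exact h
  have hnn1 : 0 ≤ w₁ t0 := by
    have htd : Tendsto w₁ (nhdsWithin t0 (Iio t0)) (nhds (w₁ t0)) :=
      (hc1.tendsto t0).mono_left nhdsWithin_le_nhds
    apply ge_of_tendsto htd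
    filter_upwards [Ioo_mem_nhdsLT_of_mem (show t0 ∈ Ioc 0 t0 from ⟨ht0pos, le_rfl⟩)] with x hx
    exact (hpos x hx.1.le hx.2).1.le
  have hnn2 : 0 ≤ w₂ t0 := by
    have htd : Tendsto w₂ (nhdsWithin t0 (Iio t0)) (nhds (w₂ t0)) :=
      (hc2.tendsto t0).mono_left nhdsWithin_le_nhds
    apply ge_of_tendsto htd
    filter_upwards [Ioo_mem_nhdsLT_of_mem (show t0 ∈ Ioc 0 t0 from ⟨ht0pos, le_rfl⟩)] with x hx
    exact (hpos x hx.1.le hx.2).2.le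
  have key : ∀ (w d : ℝ → ℝ), Continuous w →
      (∀ t, 0 < t → t < t0 → (∀ n : ℤ, t ≠ n * T) → HasDerivAt w (d t) t ∧ -(K * w t) ≤ d t) →
      0 < w 0 → 0 < w t0 := by
    intro w d hcw hdw h0w
    have hG : (fun t => Real.exp (K * t) * w t) 0 ≤ (fun t => Real.exp (K * t) * w t) t0 := by
      apply mono_T hT ht00
        ((Real.continuous_exp.comp (continuous_const.mul continuous_id)).mul hcw)
        (f' := fun t => Real.exp (K * t) * K * w t + Real.exp (K * t) * d t)
      intro t ht1 ht2 hexc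
      obtain ⟨hw, hbound⟩ := hdw t ht1 ht2 hexc
      constructor
      · have hexp : HasDerivAt (fun t => Real.exp (K * t)) (Real.exp (K * t) * K) t := by
          simpa [Function.comp_def] using (Real.hasDerivAt_exp (K * t)).comp t ((hasDerivAt_id t).const_mul K)
        exact hexp.mul hw
      · have h1 : 0 ≤ K * w t + d t := by linarith
        have h2 : 0 ≤ Real.exp (K * t) * (K * w t + d t) := mul_nonneg (Real.exp_pos _).le h1
        nlinarith
    simp only [mul_zero, Real.exp_zero, one_mul] at hG
    by_contra hneg
    push_neg at hneg
    have : Real.exp (K * t0) * w t0 ≤ 0 := mul_nonpos_of_nonneg_of_nonpos (Real.exp_pos _).le hneg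
    linarith
  have hw1pos : 0 < w₁ t0 := by
    apply key w₁ d₁ hc1 _ h01
    intro t ht1 ht2 hexc
    have ht' := hpos t ht1.le ht2
    have := hd t ht1.le (le_trans ht2.le ht0b) ht'.1.le ht'.2.le hexc
    exact ⟨this.1, this.2.2.1⟩
  have hw2pos : 0 < w₂ t0 := by
    apply key w₂ d₂ hc2 _ h02
    intro t ht1 ht2 hexc
    have ht' := hpos t ht1.le ht2
    have := hd t ht1.le (le_trans ht2.le ht0b) ht'.1.le ht'.2.le hexc
    exact ⟨this.2.1, this.2.2.2⟩
  rcases ht0S.2 with h | h <;> linarith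

lemma squareWave_bounds (T t : ℝ) : -1 ≤ squareWave T t ∧ squareWave T t ≤ 1 := by
  rw [squareWave]
  split <;> norm_num


end AuxiliaryForStatement16

set_option maxHeartbeats 1000000 in
theorem statement16 (ε α m T : ℝ) (hε : 0 < ε) (hε1 : ε ≤ 1) (hα : 0 < α)
    (hm : 0 < m) (hT : 0 < T)
    (hstab : ∀ x₁ x₂ : ℝ → ℝ, IsSolSigma ε m T x₁ x₂ → 0 < x₁ 0 → 0 < x₂ 0 →
      Filter.Tendsto x₁ Filter.atTop (nhds 0) ∧
      Filter.Tendsto x₂ Filter.atTop (nhds 0)) :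
    ∀ x₁ x₂ : ℝ → ℝ, IsSolD ε α m T x₁ x₂ → 0 ≤ x₁ 0 → 0 ≤ x₂ 0 →
      Filter.Tendsto x₁ Filter.atTop (nhds 0) ∧
      Filter.Tendsto x₂ Filter.atTop (nhds 0) := by
  intro x₁ x₂ hsol h10 h20
  obtain ⟨hc1, hc2, hder⟩ := hsol
  obtain ⟨y₁, y₂, hy, hy1, hy2⟩ := sigma_exists ε m T hT (x₁ 0 + 1) (x₂ 0 + 1)
  obtain ⟨hyc1, hyc2, hyder⟩ := hy
  -- positivity of x₁, x₂ on [0, b]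
  have hxpos : ∀ b, 0 < b → ∀ t, 0 ≤ t → t ≤ b → 0 ≤ x₁ t ∧ 0 ≤ x₂ t := by
    intro b hbpos
    obtain ⟨M1, hM1⟩ := (isCompact_Icc (a := (0:ℝ)) (b := b)).exists_bound_of_continuousOn
      hc1.continuousOn
    obtain ⟨M2, hM2⟩ := (isCompact_Icc (a := (0:ℝ)) (b := b)).exists_bound_of_continuousOn
      hc2.continuousOn
    set M := max M1 M2 with hM
    have hM1' : ∀ t, 0 ≤ t → t ≤ b → |x₁ t| ≤ M := by
      intro t h1 h2
      have := hM1 t ⟨h1, h2⟩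
      rw [Real.norm_eq_abs] at this
      exact le_trans this (le_max_left _ _)
    have hM2' : ∀ t, 0 ≤ t → t ≤ b → |x₂ t| ≤ M := by
      intro t h1 h2
      have := hM2 t ⟨h1, h2⟩
      rw [Real.norm_eq_abs] at this
      exact le_trans this (le_max_right _ _)
    have hMnn : 0 ≤ M := le_trans (abs_nonneg _) (hM1' 0 le_rfl hbpos.le)
    set K := 1 + ε + m + α * M with hK
    have hKpos : 0 < K := by
      have : 0 ≤ α * M := mul_nonneg hα.le hMnn
      rw [hK]; linarith
    intro t ht0 htb
    have hδ : ∀ δ, 0 < δ → 0 < x₁ t + δ * Real.exp (K * t) ∧ 0 < x₂ t + δ * Real.exp (K * t) := by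
      intro δ hδpos
      have hpp := pos_pair (T := T) (K := K) (b := b) hT hbpos.le
        (w₁ := fun s => x₁ s + δ * Real.exp (K * s))
        (w₂ := fun s => x₂ s + δ * Real.exp (K * s))
        (d₁ := fun s => ((squareWave T s - ε) * x₁ s - α * (x₁ s) ^ 2 + m * (x₂ s - x₁ s))
          + δ * (Real.exp (K * s) * K))
        (d₂ := fun s => ((-squareWave T s - ε) * x₂ s - α * (x₂ s) ^ 2 + m * (x₁ s - x₂ s))
          + δ * (Real.exp (K * s) * K))
        (hc1.add (continuous_const.mul (Real.continuous_exp.comp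
          (continuous_const.mul continuous_id))))
        (hc2.add (continuous_const.mul (Real.continuous_exp.comp
          (continuous_const.mul continuous_id))))
        (by simp only [mul_zero, Real.exp_zero, mul_one]; linarith)
        (by simp only [mul_zero, Real.exp_zero, mul_one]; linarith)
        ?_
      · exact hpp t ht0 htb
      intro s hs0 hsb hw1 hw2 hexc
      obtain ⟨hx1d, hx2d⟩ := hder s hexc
      have hexp : HasDerivAt (fun s => δ * Real.exp (K * s)) (δ * (Real.exp (K * s) * K)) s := by
        have h := (Real.hasDerivAt_exp (K * s)).comp s ((hasDerivAt_id s).const_mul K)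
        simpa using h.const_mul δ
      have he : (0:ℝ) < Real.exp (K * s) := Real.exp_pos _
      have hu1 := (squareWave_bounds T s).1
      have hu2 := (squareWave_bounds T s).2
      have hab1 := hM1' s hs0 hsb
      have hab2 := hM2' s hs0 hsb
      have hKval : K = 1 + ε + m + α * M := hK
      refine ⟨hx1d.add hexp, hx2d.add hexp, ?_, ?_⟩
      · have habs : |x₁ s| ≤ x₁ s + 2 * (δ * Real.exp (K * s)) := by
          rcases abs_cases (x₁ s) with ⟨h, _⟩ | ⟨h, _⟩ <;> nlinarith
        have hsq : (x₁ s) ^ 2 ≤ M * (x₁ s + 2 * (δ * Real.exp (K * s))) := by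
          have h1 : (x₁ s) ^ 2 ≤ M * |x₁ s| := by
            have := abs_mul_abs_self (x₁ s)
            nlinarith [abs_nonneg (x₁ s)]
          nlinarith [mul_le_mul_of_nonneg_left habs hMnn]
        have hA : 0 ≤ (K + squareWave T s - ε - m - α * M) * (x₁ s + δ * Real.exp (K * s)) :=
          mul_nonneg (by linarith) hw1
        have hB : 0 ≤ m * (x₂ s + δ * Real.exp (K * s)) := mul_nonneg hm.le hw2
        have hC : 0 ≤ (δ * Real.exp (K * s)) * (K - squareWave T s + ε - α * M) :=
          mul_nonneg (mul_nonneg hδpos.le he.le) (by linarith)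
        have hD : α * (x₁ s) ^ 2 ≤ α * (M * (x₁ s + 2 * (δ * Real.exp (K * s)))) :=
          mul_le_mul_of_nonneg_left hsq hα.le
        linarith [hA, hB, hC, hD]
      · have habs : |x₂ s| ≤ x₂ s + 2 * (δ * Real.exp (K * s)) := by
          rcases abs_cases (x₂ s) with ⟨h, _⟩ | ⟨h, _⟩ <;> nlinarith
        have hsq : (x₂ s) ^ 2 ≤ M * (x₂ s + 2 * (δ * Real.exp (K * s))) := by
          have h1 : (x₂ s) ^ 2 ≤ M * |x₂ s| := by
            have := abs_mul_abs_self (x₂ s)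
            nlinarith [abs_nonneg (x₂ s)]
          nlinarith [mul_le_mul_of_nonneg_left habs hMnn]
        have hA : 0 ≤ (K - squareWave T s - ε - m - α * M) * (x₂ s + δ * Real.exp (K * s)) :=
          mul_nonneg (by linarith) hw2
        have hB : 0 ≤ m * (x₁ s + δ * Real.exp (K * s)) := mul_nonneg hm.le hw1
        have hC : 0 ≤ (δ * Real.exp (K * s)) * (K + squareWave T s + ε - α * M) :=
          mul_nonneg (mul_nonneg hδpos.le he.le) (by linarith)
        have hD : α * (x₂ s) ^ 2 ≤ α * (M * (x₂ s + 2 * (δ * Real.exp (K * s)))) :=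
          mul_le_mul_of_nonneg_left hsq hα.le
        linarith [hA, hB, hC, hD]
    constructor
    · by_contra hneg
      push_neg at hneg
      have he : (0:ℝ) < Real.exp (K * t) := Real.exp_pos _
      have h := (hδ (-x₁ t / (2 * Real.exp (K * t))) (div_pos (by linarith) (by positivity))).1
      have hrw : -x₁ t / (2 * Real.exp (K * t)) * Real.exp (K * t) = -x₁ t / 2 := by
        field_simp
      rw [hrw] at h
      linarith
    · by_contra hneg
      push_neg at hneg
      have he : (0:ℝ) < Real.exp (K * t) := Real.exp_pos _
      have h := (hδ (-x₂ t / (2 * Real.exp (K * t))) (div_pos (by linarith) (by positivity))).2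
      have hrw : -x₂ t / (2 * Real.exp (K * t)) * Real.exp (K * t) = -x₂ t / 2 := by
        field_simp
      rw [hrw] at h
      linarith
  -- comparison: x < y on [0, b]
  have hcomp : ∀ b, 0 < b → ∀ t, 0 ≤ t → t ≤ b → x₁ t < y₁ t ∧ x₂ t < y₂ t := by
    intro b hb t ht0 htb
    set K := 1 + ε + m with hK
    have hpp := pos_pair (T := T) (K := K) (b := b) hT hb.le
      (w₁ := fun s => y₁ s - x₁ s) (w₂ := fun s => y₂ s - x₂ s)
      (d₁ := fun s => ((squareWave T s - ε) * y₁ s + m * (y₂ s - y₁ s))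
        - ((squareWave T s - ε) * x₁ s - α * (x₁ s) ^ 2 + m * (x₂ s - x₁ s)))
      (d₂ := fun s => ((-squareWave T s - ε) * y₂ s + m * (y₁ s - y₂ s))
        - ((-squareWave T s - ε) * x₂ s - α * (x₂ s) ^ 2 + m * (x₁ s - x₂ s)))
      (hyc1.sub hc1) (hyc2.sub hc2)
      (by rw [hy1]; linarith)
      (by rw [hy2]; linarith)
      ?_
    · have h6 := hpp t ht0 htb
      exact ⟨by linarith [h6.1], by linarith [h6.2]⟩
    intro s hs0 hsb hw1 hw2 hexc
    obtain ⟨hx1d, hx2d⟩ := hder s hexc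
    obtain ⟨hy1d, hy2d⟩ := hyder s hexc
    have hu1 := (squareWave_bounds T s).1
    have hu2 := (squareWave_bounds T s).2
    have hKval : K = 1 + ε + m := hK
    refine ⟨hy1d.sub hx1d, hy2d.sub hx2d, ?_, ?_⟩
    · have hA : 0 ≤ (K + squareWave T s - ε - m) * (y₁ s - x₁ s) :=
        mul_nonneg (by linarith) hw1
      have hB : 0 ≤ m * (y₂ s - x₂ s) := mul_nonneg hm.le hw2
      have hC : 0 ≤ α * (x₁ s) ^ 2 := mul_nonneg hα.le (sq_nonneg _)
      linarith [hA, hB, hC]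
    · have hA : 0 ≤ (K - squareWave T s - ε - m) * (y₂ s - x₂ s) :=
        mul_nonneg (by linarith) hw2
      have hB : 0 ≤ m * (y₁ s - x₁ s) := mul_nonneg hm.le hw1
      have hC : 0 ≤ α * (x₂ s) ^ 2 := mul_nonneg hα.le (sq_nonneg _)
      linarith [hA, hB, hC]
  have hylim := hstab y₁ y₂ ⟨hyc1, hyc2, hyder⟩ (by rw [hy1]; linarith) (by rw [hy2]; linarith)
  constructor
  · apply tendsto_of_tendsto_of_tendsto_of_le_of_le' tendsto_const_nhds hylim.1
    · filter_upwards [eventually_ge_atTop (0:ℝ)] with t ht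
      exact (hxpos (t + 1) (by linarith) t ht (by linarith)).1
    · filter_upwards [eventually_ge_atTop (0:ℝ)] with t ht
      exact (hcomp (t + 1) (by linarith) t ht (by linarith)).1.le
  · apply tendsto_of_tendsto_of_tendsto_of_le_of_le' tendsto_const_nhds hylim.2
    · filter_upwards [eventually_ge_atTop (0:ℝ)] with t ht
      exact (hxpos (t + 1) (by linarith) t ht (by linarith)).2
    · filter_upwards [eventually_ge_atTop (0:ℝ)] with t ht
      exact (hcomp (t + 1) (by linarith) t ht (by linarith)).2.le
end
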